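/- arXiv:2207.07108 — 11 statements merged into one kernel-verified Lean document; each statement's English description precedes it below -/
import Mathlib

section
/- Let p be a prime and let 𝔟 be an ideal in a commutative ring B. Then the following are equivalent: (1) for all n ≥ 1 and all a ∈ 𝔟, a^n ∈ p^{v_p(n!)}·𝔟; (2) for all a ∈ 𝔟, a^p ∈ p·𝔟. Here v_p denotes the p-adic valuation. -/
/-- For an ideal 𝔟 in a commutative ring B and a prime p, the following are
equivalent: (1) for all n ≥ 1 and a ∈ 𝔟, a^n ∈ p^{v_p(n!)}·𝔟; (2) for all a ∈ 𝔟, a^p ∈ p·𝔟. -/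
theorem dp_at_p_iff_dp {B : Type*} [CommRing B] (p : ℕ) (hp : p.Prime) (I : Ideal B) :
    (∀ n : ℕ, 1 ≤ n → ∀ a ∈ I, ∃ b ∈ I,
        a ^ n = (p : B) ^ (padicValNat p (Nat.factorial n)) * b) ↔
    (∀ a ∈ I, ∃ b ∈ I, a ^ p = (p : B) * b) := by
  haveI : Fact p.Prime := ⟨hp⟩
  have hsmall : ∀ m : ℕ, m < p → padicValNat p (Nat.factorial m) = 0 := by
    intro m hm
    exact padicValNat.eq_zero_of_not_dvd (fun h => by
      have := (Nat.Prime.dvd_factorial hp).mp h; omega)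
  constructor
  · intro h a ha
    obtain ⟨b, hb, hab⟩ := h p hp.one_lt.le a ha
    have h1 := hp.one_lt
    have hv : padicValNat p (Nat.factorial p) = 1 := by
      rw [show Nat.factorial p = p * Nat.factorial (p - 1) by
            conv_lhs => rw [show p = (p-1) + 1 by omega]
            rw [Nat.factorial_succ, show (p-1)+1 = p by omega],
          padicValNat.mul hp.pos.ne' (Nat.factorial_ne_zero _),
          padicValNat.self hp.one_lt, hsmall (p - 1) (by omega)]
    refine ⟨b, hb, ?_⟩
    rw [hab, hv, pow_one]
  · intro h n
    induction n using Nat.strong_induction_on with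
    | _ n ih =>
    intro hn a ha
    set q := n / p with hq
    set r := n % p with hr
    have hrec : padicValNat p (Nat.factorial n) = padicValNat p (Nat.factorial q) + q := by
      rw [← padicValNat_mul_div_factorial (p := p) n, padicValNat_factorial_mul]
    obtain ⟨b, hb, hab⟩ := h a ha
    rcases Nat.eq_zero_or_pos q with hq0 | hq1
    · have hnp : n < p := by
        by_contra hc
        exact absurd (Nat.div_pos (le_of_not_gt hc) hp.pos) (by omega)
      refine ⟨a ^ n, I.pow_mem_of_mem ha n (by omega), ?_⟩
      rw [hsmall n hnp, pow_zero, one_mul]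
    · obtain ⟨c, hc, hcc⟩ := ih q (by
        have := Nat.div_lt_self (by omega : 0 < n) hp.one_lt
        omega) hq1 b hb
      refine ⟨c * a ^ r, I.mul_mem_right _ hc, ?_⟩
      have hdiv : n = p * q + r := (Nat.div_add_mod n p).symm
      calc a ^ n = (a ^ p) ^ q * a ^ r := by rw [← pow_mul, ← pow_add, ← hdiv]
        _ = ((p : B) * b) ^ q * a ^ r := by rw [hab]
        _ = (p : B) ^ q * (b ^ q * a ^ r) := by ring
        _ = (p : B) ^ q * (((p : B) ^ padicValNat p (Nat.factorial q) * c) * a ^ r) := by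
            rw [hcc]
        _ = (p : B) ^ (padicValNat p (Nat.factorial q) + q) * (c * a ^ r) := by ring
        _ = _ := by rw [hrec]
end

section
/- Let p be a prime, A a commutative ring, S ⊆ A a subset, and 𝔞 the ideal generated by S. If a^p ∈ p·𝔞 for every a ∈ S, then a^p ∈ p·𝔞 for every a ∈ 𝔞. -/
/-- the divided-power condition a^p ∈ p·𝔞 need only be checked on a generating
set S of the ideal 𝔞 = span S. -/
theorem dp_of_generators {A : Type*} [CommRing A] (p : ℕ) (hp : p.Prime) (S : Set A)
    (h : ∀ a ∈ S, ∃ b ∈ Ideal.span S, a ^ p = (p : A) * b) :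
    ∀ a ∈ Ideal.span S, ∃ b ∈ Ideal.span S, a ^ p = (p : A) * b := by
  intro a ha
  refine Submodule.span_induction ?_ ?_ ?_ ?_ ha
  · exact h
  · exact ⟨0, Ideal.zero_mem _, by rw [zero_pow hp.ne_zero, mul_zero]⟩
  · rintro x y hx hy ⟨b, hb, hbe⟩ ⟨c, hc, hce⟩
    set s := ∑ k ∈ Finset.Ioo 0 p, x ^ k * y ^ (p - k) * ↑(p.choose k / p) with hs
    have hsmem : s ∈ Ideal.span S := by
      refine Submodule.sum_mem _ fun k hk => ?_
      rw [Finset.mem_Ioo] at hk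
      exact Ideal.mul_mem_right _ _ (Ideal.mul_mem_right _ _
        (Ideal.pow_mem_of_mem (Ideal.span S) hx k hk.1))
    refine ⟨b + c + s, by exact Ideal.add_mem _ (Ideal.add_mem _ hb hc) hsmem, ?_⟩
    rw [add_pow_prime_eq' hp, hbe, hce]
    ring
  · rintro c x hx ⟨b, hb, hbe⟩
    refine ⟨c ^ p * b, Ideal.mul_mem_left _ _ hb, ?_⟩
    rw [smul_eq_mul, mul_pow, hbe]
    ring
end

section
/- Let p be a prime and A a commutative ring. If 𝔞 ⊆ A is an ideal satisfying a^p ∈ p·𝔞 for all a ∈ 𝔞, then for any ideal 𝔟 ⊆ A, the product ideal 𝔞𝔟 satisfies c^p ∈ p·(𝔞𝔟) for all c ∈ 𝔞𝔟. -/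
/-- if 𝔞 satisfies the divided-power property a^p ∈ p𝔞 for all a ∈ 𝔞, then so does
the product ideal 𝔞𝔟 for any ideal 𝔟. -/
theorem dp_mul_ideal {A : Type*} [CommRing A] (p : ℕ) (hp : p.Prime) (I J : Ideal A)
    (h : ∀ a ∈ I, ∃ b ∈ I, a ^ p = (p : A) * b) :
    ∀ c ∈ I * J, ∃ b ∈ I * J, c ^ p = (p : A) * b := by
  have key : ∀ c ∈ I * J, c ∈ I * J ∧ ∃ b ∈ I * J, c ^ p = (p : A) * b := by
    intro c hc
    refine Submodule.mul_induction_on hc ?_ ?_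
    · intro a ha b hb
      obtain ⟨a', ha', hap⟩ := h a ha
      refine ⟨Ideal.mul_mem_mul ha hb, a' * b ^ p,
        Ideal.mul_mem_mul ha' (Ideal.pow_mem_of_mem J hb p hp.pos), ?_⟩
      rw [mul_pow, hap, mul_assoc]
    · rintro x y ⟨hx, bx, hbx, hbx'⟩ ⟨hy, by', hby, hby'⟩
      refine ⟨add_mem hx hy, bx + by' +
        ∑ k ∈ Finset.Ioo 0 p, x ^ k * y ^ (p - k) * ↑(p.choose k / p), ?_, ?_⟩
      · refine add_mem (add_mem hbx hby) (Submodule.sum_mem _ fun k hk => ?_)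
        rw [Finset.mem_Ioo] at hk
        exact Ideal.mul_mem_right _ _ (Ideal.mul_mem_right _ _
          (Ideal.pow_mem_of_mem _ hx k hk.1))
      · rw [add_pow_prime_eq hp, hbx', hby']
        have hs : (p : A) * x * y * ∑ k ∈ Finset.Ioo 0 p, x ^ (k - 1) * y ^ (p - k - 1) *
            ↑(p.choose k / p) =
            (p : A) * ∑ k ∈ Finset.Ioo 0 p, x ^ k * y ^ (p - k) * ↑(p.choose k / p) := by
          rw [Finset.mul_sum, Finset.mul_sum]
          refine Finset.sum_congr rfl fun k hk => ?_
          rw [Finset.mem_Ioo] at hk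
          obtain ⟨i, rfl⟩ : ∃ i, k = i + 1 := ⟨k - 1, by omega⟩
          obtain ⟨j, hj⟩ : ∃ j, p - (i + 1) = j + 1 := ⟨p - (i + 1) - 1, by omega⟩
          rw [hj, Nat.add_sub_cancel, Nat.add_sub_cancel]
          ring
        rw [hs]
        ring
  intro c hc
  exact (key c hc).2
end

section
/- Let p be a prime, A a torsion-free ℤ_(p)-algebra (i.e. a commutative ring, torsion-free as ℤ-module, in which every prime other than p is invertible), and 𝔞 ⊆ A a divided-power ideal. If x ≡ y mod 𝔞 for x, y ∈ A, then for every m ≥ 0, x^{p^m} ≡ y^{p^m} mod p^m·𝔞. -/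
/-- Key step: if `u - v = q * c` with `c ∈ I`, then `u^p - v^p = (p*q) * d` with `d ∈ I`. -/
theorem dp_step {A : Type*} [CommRing A] (p : ℕ) (hp : p.Prime)
    (I : Ideal A) (hdp : ∀ a ∈ I, ∃ b ∈ I, a ^ p = (p : A) * b)
    (q u v c : A) (hc : c ∈ I) (h : u - v = q * c) :
    ∃ d ∈ I, u ^ p - v ^ p = ((p : A) * q) * d := by
  set J : Ideal A := Ideal.span {(p : A) * q} * I with hJdef
  have hmem : ∀ (a b : A), b ∈ I → ((p : A) * q) * a * b ∈ J := by
    intro a b hb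
    exact Ideal.mul_mem_mul (Ideal.mem_span_singleton.mpr ⟨a, rfl⟩) hb
  have hextract : ∀ z ∈ J, ∃ d ∈ I, z = ((p : A) * q) * d := by
    intro z hz
    refine Submodule.mul_induction_on hz ?_ ?_
    · intro m hm n hn
      obtain ⟨t, ht⟩ := Ideal.mem_span_singleton.mp hm
      exact ⟨t * n, I.mul_mem_left t hn, by rw [ht]; ring⟩
    · rintro z w ⟨d1, hd1, rfl⟩ ⟨d2, hd2, rfl⟩
      exact ⟨d1 + d2, I.add_mem hd1 hd2, by ring⟩
  have hu : u = v + q * c := by linear_combination h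
  have expand : u ^ p - v ^ p =
      ∑ k ∈ Finset.range p, v ^ k * (q * c) ^ (p - k) * (p.choose k : A) := by
    rw [hu, add_pow, Finset.sum_range_succ]
    simp
  have hsum : u ^ p - v ^ p ∈ J := by
    rw [expand]
    refine Ideal.sum_mem _ ?_
    intro k hk
    have hkp : k < p := Finset.mem_range.mp hk
    rcases Nat.eq_zero_or_pos k with hk0 | hkpos
    · -- k = 0 : use the divided power structure
      subst hk0
      obtain ⟨c', hc'I, hc'⟩ := hdp c hc
      obtain ⟨n, hn⟩ : ∃ n, p = n + 1 := ⟨p - 1, by omega⟩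
      have heq : v ^ 0 * (q * c) ^ (p - 0) * (p.choose 0 : A)
          = ((p : A) * q) * (q ^ n) * c' := by
        simp only [pow_zero, one_mul, Nat.choose_zero_right, Nat.cast_one, mul_one,
          Nat.sub_zero]
        rw [mul_pow, hc', show q ^ p = q * q ^ n by rw [hn, pow_succ]; ring]
        ring
      rw [heq]
      exact hmem _ _ hc'I
    · -- 1 ≤ k < p : p divides the binomial coefficient
      obtain ⟨e, he⟩ : p ∣ p.choose k := hp.dvd_choose_self (by omega) hkp
      obtain ⟨n, hn⟩ : ∃ n, p - k = n + 1 := ⟨p - k - 1, by omega⟩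
      have heq : v ^ k * (q * c) ^ (p - k) * (p.choose k : A)
          = ((p : A) * q) * (v ^ k * q ^ n * (e : A) * c ^ n) * c := by
        rw [hn, he]
        push_cast
        rw [mul_pow, pow_succ, pow_succ]
        ring
      rw [heq]
      exact hmem _ _ hc
  exact hextract _ hsum

/-- Let A be a torsion-free ℤ_(p)-algebra (torsion-free as ℤ-module, every prime
other than p invertible) and 𝔞 a divided-power ideal.  If x ≡ y mod 𝔞 then
x^{p^m} ≡ y^{p^m} mod p^m·𝔞 for all m ≥ 0. -/
theorem pow_prime_pow_congr {A : Type*} [CommRing A] (p : ℕ) (hp : p.Prime)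
    (htf : ∀ (n : ℤ) (a : A), n ≠ 0 → n • a = 0 → a = 0)
    (hinv : ∀ q : ℕ, q.Prime → q ≠ p → IsUnit (q : A))
    (I : Ideal A) (hdp : ∀ a ∈ I, ∃ b ∈ I, a ^ p = (p : A) * b)
    (x y : A) (hxy : x - y ∈ I) :
    ∀ m : ℕ, ∃ b ∈ I, x ^ (p ^ m) - y ^ (p ^ m) = (p : A) ^ m * b := by
  intro m
  induction m with
  | zero => exact ⟨x - y, hxy, by simp⟩
  | succ m ih =>
    obtain ⟨b, hb, heq⟩ := ih
    obtain ⟨d, hd, hdq⟩ := dp_step p hp I hdp ((p : A) ^ m) (x ^ (p ^ m)) (y ^ (p ^ m)) b hb heq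
    refine ⟨d, hd, ?_⟩
    rw [pow_succ, pow_mul, pow_mul, hdq, pow_succ]
    ring
end

section
/- Let p be a prime, A a torsion-free ℤ_(p)-algebra, and 𝔞 ⊆ A a divided-power ideal. If x ≡ y mod 𝔞 for x, y ∈ A, then for every n ≥ 1, x^n ≡ y^n mod p^{v_p(n)}·𝔞, where v_p(n) is the p-adic valuation of n. -/
/-- Let A be a torsion-free ℤ_(p)-algebra and 𝔞 a divided-power ideal.  If
x ≡ y mod 𝔞 then x^n ≡ y^n mod p^{v_p(n)}·𝔞 for all n ≥ 1. -/
theorem pow_congr_padic {A : Type*} [CommRing A] (p : ℕ) (hp : p.Prime)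
    (htf : ∀ (n : ℤ) (a : A), n ≠ 0 → n • a = 0 → a = 0)
    (hinv : ∀ q : ℕ, q.Prime → q ≠ p → IsUnit (q : A))
    (I : Ideal A) (hdp : ∀ a ∈ I, ∃ b ∈ I, a ^ p = (p : A) * b)
    (x y : A) (hxy : x - y ∈ I) :
    ∀ n : ℕ, 1 ≤ n → ∃ b ∈ I, x ^ n - y ^ n = (p : A) ^ (padicValNat p n) * b := by
  have hp1 : 1 ≤ p := hp.one_lt.le
  -- key step: one application of Frobenius raises the power of p by one
  have key : ∀ (m : ℕ) (z w : A), z - w ∈ Ideal.span {(p:A)^m} * I →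
      z ^ p - w ^ p ∈ Ideal.span {(p:A)^(m+1)} * I := by
    intro m z w hzw
    rw [Ideal.mem_span_singleton_mul] at hzw
    obtain ⟨c, hc, hzc⟩ := hzw
    have hz : z = w + (p:A)^m * c := by linear_combination -hzc
    subst hz
    rw [add_pow]
    rw [Finset.sum_range_succ]
    have hlast : w ^ p * ((p:A)^m * c) ^ (p - p) * (p.choose p : A) = w ^ p := by
      simp
    rw [hlast, add_sub_cancel_right]
    apply Ideal.sum_mem
    intro k hk
    rw [Finset.mem_range] at hk
    rw [Ideal.mem_span_singleton_mul]
    rcases Nat.eq_zero_or_pos k with hk0 | hk1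
    · -- k = 0 : use the divided power structure
      subst hk0
      obtain ⟨b, hb, hcb⟩ := hdp c hc
      refine ⟨(p:A)^(m*p - m) * b, I.mul_mem_left _ hb, ?_⟩
      have hle : m ≤ m * p := Nat.le_mul_of_pos_right m hp.pos
      have harith : (m + 1) + (m * p - m) = m * p + 1 := by omega
      have hpow : (p:A)^(m+1) * ((p:A)^(m*p - m) * b) = (p:A)^(m*p) * ((p:A) * b) := by
        rw [← mul_assoc, ← pow_add, harith, pow_succ]
        ring
      rw [hpow, ← hcb]
      simp [mul_pow, ← pow_mul]
    · -- 1 ≤ k < p : use p ∣ choose p k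
      have hdvd : p ∣ p.choose k := hp.dvd_choose_self hk1.ne' hk
      obtain ⟨t, ht⟩ := hdvd
      have hpk : 1 ≤ p - k := by omega
      refine ⟨c ^ (p - k) * (w ^ k * (p:A)^(m*(p-k) - m) * (t:A)),
        I.mul_mem_right _ (Ideal.pow_mem_of_mem I hc _ hpk), ?_⟩
      have hle : m ≤ m * (p - k) := Nat.le_mul_of_pos_right m hpk
      have harith : (m + 1) + (m * (p - k) - m) = m * (p - k) + 1 := by omega
      have : ((p.choose k : ℕ) : A) = (p:A) * (t:A) := by
        rw [ht]; push_cast; ring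
      rw [this]
      rw [mul_pow, ← pow_mul]
      calc (p:A)^(m+1) * (c ^ (p - k) * (w ^ k * (p:A)^(m*(p-k) - m) * (t:A)))
          = (p:A)^((m+1) + (m*(p-k) - m)) * (c ^ (p - k) * (w ^ k * (t:A))) := by
            rw [pow_add]; ring
        _ = (p:A)^(m*(p-k) + 1) * (c ^ (p - k) * (w ^ k * (t:A))) := by rw [harith]
        _ = w ^ k * (p:A) ^ (m * (p - k)) * c ^ (p - k) * ((p:A) * (t:A)) := by
            rw [pow_succ]; ring
        _ = w ^ k * ((p:A) ^ (m * (p - k)) * c ^ (p - k)) * ((p:A) * (t:A)) := by ring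
  -- iterate: prime power case
  have iter : ∀ k : ℕ, x ^ (p ^ k) - y ^ (p ^ k) ∈ Ideal.span {(p:A)^k} * I := by
    intro k
    induction k with
    | zero => simpa [Ideal.span_singleton_one, Ideal.top_mul] using hxy
    | succ k ih =>
        rw [show p ^ (k + 1) = p ^ k * p from pow_succ p k, pow_mul, pow_mul]
        exact key k _ _ ih
  intro n hn
  set v := padicValNat p n with hv
  have hdvd : p ^ v ∣ n := pow_padicValNat_dvd
  obtain ⟨m, hm⟩ := hdvd
  have hxn : x ^ n = (x ^ (p ^ v)) ^ m := by rw [← pow_mul, ← hm]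
  have hyn : y ^ n = (y ^ (p ^ v)) ^ m := by rw [← pow_mul, ← hm]
  have hmem : x ^ n - y ^ n ∈ Ideal.span {(p:A)^v} * I := by
    rw [hxn, hyn]
    obtain ⟨e, he⟩ := sub_dvd_pow_sub_pow (x ^ (p ^ v)) (y ^ (p ^ v)) m
    rw [he]
    exact Ideal.mul_mem_right _ _ (iter v)
  rw [Ideal.mem_span_singleton_mul] at hmem
  obtain ⟨b, hb, hb'⟩ := hmem
  exact ⟨b, hb, hb'.symm⟩
end

section
/- The Artin-Hasse exponential series F(z) = exp(Σ_{j≥0} z^{p^j}/p^j), a priori in ℚ⟦z⟧, satisfies the product formula F(z) = Π_{d ≥ 1, p ∤ d} (1 − z^d)^{−μ(d)/d}, where μ is the Möbius function. -/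
open PowerSeries in
/-- The exponential `exp f = Σ_k f^k / k!` of a power series (intended for `f` with zero
constant term, in which case the coefficientwise sums are finite). -/
noncomputable def PowerSeriesExpOf (f : PowerSeries ℚ) : PowerSeries ℚ :=
  PowerSeries.mk fun n =>
    ∑ k ∈ Finset.range (n + 1), (1 / (Nat.factorial k : ℚ)) * coeff n (f ^ k)

open scoped Classical in
/-- The series Σ_{j ≥ 0} z^{p^j}/p^j: its coefficient at n = p^j is 1/p^j = 1/n. -/
noncomputable def AHinner (p : ℕ) : PowerSeries ℚ :=
  PowerSeries.mk fun n => if ∃ j : ℕ, n = p ^ j then (1 : ℚ) / n else 0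

/-- The Artin–Hasse exponential series F(z) = exp(Σ_{j≥0} z^{p^j}/p^j) ∈ ℚ⟦z⟧. -/
noncomputable def ArtinHasse (p : ℕ) : PowerSeries ℚ := PowerSeriesExpOf (AHinner p)

open PowerSeries in
/-- `(1 - z^d)^α` for a rational exponent α, via the binomial series
`(1 + u)^α = Σ_k (α choose k) u^k` with `u = -z^d`. -/
noncomputable def OneSubZdPow (α : ℚ) (d : ℕ) : PowerSeries ℚ :=
  PowerSeries.mk fun n =>
    ∑ k ∈ Finset.range (n + 1), Ring.choose α k * coeff n ((-(X : PowerSeries ℚ) ^ d) ^ k)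

namespace ArtinHasseAux

open PowerSeries ArithmeticFunction

private lemma choose_id (α : ℚ) (k : ℕ) :
    ((k:ℚ) + 1) * Ring.choose α (k + 1) = (α - (k:ℚ)) * Ring.choose α k := by
  have h1 := Ring.descPochhammer_eq_factorial_smul_choose α (k+1)
  have h0 := Ring.descPochhammer_eq_factorial_smul_choose α k
  rw [descPochhammer_succ_right, Polynomial.smeval_mul, h0, Polynomial.smeval_sub,
      Polynomial.smeval_X, Polynomial.smeval_natCast] at h1
  have hk : (k.factorial : ℚ) ≠ 0 := Nat.cast_ne_zero.mpr (Nat.factorial_ne_zero k)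
  apply mul_left_cancel₀ hk
  push_cast [Nat.factorial_succ, nsmul_eq_mul] at h1 ⊢
  linear_combination -h1

private lemma coeff_pow_zero_of_lt {f : PowerSeries ℚ} (hf : constantCoeff f = 0)
    {k a : ℕ} (h : a < k) : coeff a (f ^ k) = 0 := by
  have hd : (X : PowerSeries ℚ)^k ∣ f^k := pow_dvd_pow_of_dvd (X_dvd_iff.mpr hf) k
  exact (X_pow_dvd_iff.mp hd) a h

/-- The geometric series `Σ_j z^{dj} = (1-z^d)⁻¹`. -/
noncomputable def geom (d : ℕ) : PowerSeries ℚ := PowerSeries.mk fun j => if d ∣ j then 1 else 0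

lemma one_sub_mul_geom {d : ℕ} (hd : 0 < d) : ((1 : PowerSeries ℚ) - X^d) * geom d = 1 := by
  ext n
  simp only [sub_mul, one_mul, map_sub, coeff_X_pow_mul', geom, coeff_mk,
    PowerSeries.coeff_one]
  have e1 : d ∣ n → d ≤ n ∨ n = 0 := fun h => by
    rcases Nat.eq_zero_or_pos n with rfl | hn
    · exact Or.inr rfl
    · exact Or.inl (Nat.le_of_dvd hn h)
  have e2 : d ≤ n → (d ∣ n - d ↔ d ∣ n) := fun h => by
    constructor
    · intro hc; have := Nat.dvd_add hc (dvd_refl d); rwa [Nat.sub_add_cancel h] at this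
    · intro hc; exact Nat.dvd_sub hc dvd_rfl
  split_ifs <;> simp_all

lemma coeff_OneSubZdPow (α : ℚ) {d : ℕ} (hd : 0 < d) (n : ℕ) :
    coeff n (OneSubZdPow α d) =
      if d ∣ n then (-1)^(n/d) * Ring.choose α (n/d) else 0 := by
  rw [OneSubZdPow, coeff_mk]
  have key : ∀ k, coeff n ((-(X : PowerSeries ℚ)^d)^k)
      = if d*k = n then (-1)^k else 0 := by
    intro k
    rw [neg_pow, ← pow_mul]
    rw [show ((-1 : PowerSeries ℚ)^k * X^(d*k)) = ((-1:ℚ)^k) • (X^(d*k) : PowerSeries ℚ) by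
      rw [PowerSeries.smul_eq_C_mul, map_pow, map_neg, map_one]]
    rw [LinearMap.map_smul, smul_eq_mul, coeff_X_pow]
    split_ifs with h1 h2 h3 <;> simp_all
  simp only [key]
  by_cases hdvd : d ∣ n
  · obtain ⟨m, rfl⟩ := hdvd
    rw [if_pos ⟨m, rfl⟩, Nat.mul_div_cancel_left m hd]
    rw [Finset.sum_eq_single m]
    · rw [if_pos rfl, mul_comm]
    · intro k _ hk
      rw [if_neg (fun hc => hk (Nat.eq_of_mul_eq_mul_left hd hc)), mul_zero]
    · intro hm
      exact absurd (Finset.mem_range.mpr (by nlinarith [Nat.le_mul_of_pos_left m hd])) hm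
  · rw [if_neg hdvd]
    apply Finset.sum_eq_zero
    intro k _
    rw [if_neg (fun hc => hdvd ⟨k, hc.symm⟩), mul_zero]

lemma constantCoeff_OneSubZdPow (α : ℚ) {d : ℕ} (hd : 0 < d) :
    constantCoeff (OneSubZdPow α d) = 1 := by
  rw [← coeff_zero_eq_constantCoeff_apply, coeff_OneSubZdPow α hd, if_pos (dvd_zero d)]
  simp [Ring.choose_zero_right]

lemma deriv_rel (α : ℚ) {d : ℕ} (hd : 0 < d) :
    ((1 : PowerSeries ℚ) - X^d) * (derivative ℚ (OneSubZdPow α d))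
      = C (-α * d) * (X^(d-1) * OneSubZdPow α d) := by
  set B := OneSubZdPow α d with hB
  ext n
  rw [sub_mul, one_mul, map_sub, coeff_C_mul, coeff_X_pow_mul', coeff_X_pow_mul',
    coeff_derivative, coeff_derivative]
  by_cases hdvd : d ∣ (n+1)
  · obtain ⟨m, hm⟩ := hdvd
    rcases m with _ | k
    · omega
    have hlin : n + 1 = d * k + d := by rw [hm, Nat.mul_succ]
    have hq : ((n:ℚ)+1) = (d:ℚ)*((k:ℚ)+1) := by exact_mod_cast hm
    have hc1 : coeff (n+1) B = (-1)^(k+1) * Ring.choose α (k+1) := by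
      rw [hB, coeff_OneSubZdPow α hd, if_pos ⟨k+1, hm⟩, hm, Nat.mul_div_cancel_left _ hd]
    have hc0 : ∀ j, j = d * k → coeff j B = (-1)^k * Ring.choose α k := by
      intro j hj
      rw [hB, coeff_OneSubZdPow α hd, hj, if_pos ⟨k, rfl⟩, Nat.mul_div_cancel_left _ hd]
    have hsecond : (if d ≤ n then coeff (n-d+1) B * ((n-d : ℕ)+1 : ℚ) else 0)
        = ((d : ℚ) * k) * ((-1)^k * Ring.choose α k) := by
      by_cases hdn : d ≤ n
      · rw [if_pos hdn, hc0 (n-d+1) (by omega)]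
        have : ((n-d : ℕ) + 1 : ℚ) = (d:ℚ) * k := by exact_mod_cast (by omega : n - d + 1 = d * k)
        rw [this]; ring
      · have hk0 : k = 0 := by
          rcases Nat.mul_eq_zero.mp (by omega : d * k = 0) with h | h <;> omega
        rw [if_neg hdn, hk0]; push_cast; ring
    rw [hc1, hsecond, if_pos (by omega : d - 1 ≤ n), hc0 (n - (d-1)) (by omega)]
    rw [hq]
    linear_combination (-(-1:ℚ)^k * d) * choose_id α k
  · have hz : ∀ j, j + d = n + 1 → coeff j B = 0 := by
      intro j hj
      rw [hB, coeff_OneSubZdPow α hd, if_neg]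
      intro hc
      exact hdvd (by rw [← hj]; exact Nat.dvd_add hc dvd_rfl)
    have hc1 : coeff (n+1) B = 0 := by
      rw [hB, coeff_OneSubZdPow α hd, if_neg (fun h => hdvd h)]
    rw [hc1]
    have h2 : (if d ≤ n then coeff (n-d+1) B * ((n-d : ℕ)+1 : ℚ) else 0) = 0 := by
      by_cases hdn : d ≤ n
      · rw [if_pos hdn, hz (n-d+1) (by omega), zero_mul]
      · rw [if_neg hdn]
    have h3 : (if d - 1 ≤ n then coeff (n-(d-1)) B else 0) = 0 := by
      by_cases hdn : d - 1 ≤ n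
      · rw [if_pos hdn, hz (n-(d-1)) (by omega)]
      · rw [if_neg hdn]
    rw [h2, h3]
    ring

lemma deriv_OneSubZdPow (α : ℚ) {d : ℕ} (hd : 0 < d) :
    derivative ℚ (OneSubZdPow α d)
      = (C (-α * d) * X^(d-1) * geom d) * OneSubZdPow α d := by
  have h1 : derivative ℚ (OneSubZdPow α d)
      = geom d * (((1 : PowerSeries ℚ) - X^d) * derivative ℚ (OneSubZdPow α d)) := by
    rw [← mul_assoc, mul_comm (geom d), one_sub_mul_geom hd, one_mul]
  rw [h1, deriv_rel α hd]
  ring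

lemma deriv_expOf {A : PowerSeries ℚ} (hA : constantCoeff A = 0) :
    derivative ℚ (PowerSeriesExpOf A) = derivative ℚ A * PowerSeriesExpOf A := by
  ext n
  rw [coeff_derivative]
  rw [show coeff (n+1) (PowerSeriesExpOf A)
      = ∑ k ∈ Finset.range (n + 2), (1 / (Nat.factorial k : ℚ)) * coeff (n+1) (A ^ k) from
    by rw [PowerSeriesExpOf, coeff_mk]]
  rw [Finset.sum_mul]
  have step1 : ∀ k ∈ Finset.range (n+2),
      (1 / (Nat.factorial k : ℚ)) * coeff (n+1) (A ^ k) * ((n:ℚ)+1)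
      = (1 / (Nat.factorial k : ℚ)) * ((k : ℚ) * coeff n (A^(k-1) * derivative ℚ A)) := by
    intro k _
    have hD : coeff n (derivative ℚ (A ^ k)) = (k:ℚ) * coeff n (A^(k-1) * derivative ℚ A) := by
      rw [Derivation.leibniz_pow, smul_eq_mul, map_nsmul, nsmul_eq_mul]
    rw [← hD, coeff_derivative]
    ring
  rw [Finset.sum_congr rfl step1, Finset.sum_range_succ']
  simp only [Nat.cast_zero, zero_mul, mul_zero, add_zero]
  have step2 : ∀ j ∈ Finset.range (n+1),
      (1 / ((Nat.factorial (j+1) : ℕ) : ℚ)) * (((j+1 : ℕ) : ℚ) * coeff n (A^(j+1-1) * derivative ℚ A))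
      = (1 / (Nat.factorial j : ℚ)) * coeff n (derivative ℚ A * A^j) := by
    intro j _
    rw [Nat.add_sub_cancel, mul_comm (A^j)]
    have hfac : ((Nat.factorial (j+1) : ℕ) : ℚ) = ((j+1:ℕ) : ℚ) * (Nat.factorial j : ℚ) := by
      exact_mod_cast Nat.factorial_succ j
    rw [hfac]
    have h1 : ((j+1:ℕ):ℚ) ≠ 0 := by positivity
    have h2 : ((Nat.factorial j : ℕ):ℚ) ≠ 0 := Nat.cast_ne_zero.mpr (Nat.factorial_ne_zero j)
    field_simp
  rw [Finset.sum_congr rfl step2]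
  rw [coeff_mul]
  have expand : ∀ ab ∈ Finset.HasAntidiagonal.antidiagonal n,
      coeff ab.1 (derivative ℚ A) * coeff ab.2 (PowerSeriesExpOf A)
      = ∑ j ∈ Finset.range (n+1),
          coeff ab.1 (derivative ℚ A) * ((1 / (Nat.factorial j : ℚ)) * coeff ab.2 (A ^ j)) := by
    intro ab hab
    have hb : ab.2 ≤ n := by
      have := Finset.HasAntidiagonal.antidiagonal.snd_le hab
      omega
    rw [show coeff ab.2 (PowerSeriesExpOf A)
        = ∑ j ∈ Finset.range (ab.2 + 1), (1 / (Nat.factorial j : ℚ)) * coeff ab.2 (A ^ j) from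
      by rw [PowerSeriesExpOf, coeff_mk]]
    rw [Finset.mul_sum]
    apply Finset.sum_subset (Finset.range_subset_range.mpr (by omega))
    intro j _ hj
    rw [coeff_pow_zero_of_lt hA (by simp at hj ⊢; omega), mul_zero, mul_zero]
  rw [Finset.sum_congr rfl expand, Finset.sum_comm]
  apply Finset.sum_congr rfl
  intro j _
  rw [coeff_mul, Finset.mul_sum]
  apply Finset.sum_congr rfl
  intro ab _
  ring

lemma constantCoeff_AHinner (p : ℕ) : constantCoeff (AHinner p) = 0 := by
  rw [← coeff_zero_eq_constantCoeff_apply, AHinner, coeff_mk]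
  split <;> simp

lemma deriv_prod (S : Finset ℕ) (B v : ℕ → PowerSeries ℚ)
    (h : ∀ d ∈ S, derivative ℚ (B d) = v d * B d) :
    derivative ℚ (∏ d ∈ S, B d) = (∑ d ∈ S, v d) * ∏ d ∈ S, B d := by
  induction S using Finset.cons_induction with
  | empty => simp
  | cons a s ha ih =>
    rw [Finset.prod_cons, Derivation.leibniz, ih (fun d hd => h d (Finset.mem_cons_of_mem hd)),
      h a (Finset.mem_cons_self a s), Finset.sum_cons, smul_eq_mul, smul_eq_mul]
    ring

open scoped Classical in
lemma moebius_filter_sum {p : ℕ} (hp : p.Prime) {N : ℕ} (hN : 0 < N) :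
    ∑ d ∈ N.divisors.filter (fun d => ¬ p ∣ d), ((moebius d : ℤ) : ℚ)
      = if ∃ j : ℕ, N = p ^ j then 1 else 0 := by
  classical
  set v := N.factorization p with hv
  set M := N / p ^ v with hM
  have hMpos : 0 < M := Nat.ordCompl_pos p hN.ne'
  have hNeq : p ^ v * M = N := Nat.ordProj_mul_ordCompl_eq_self N p
  have hfilter : N.divisors.filter (fun d => ¬ p ∣ d) = M.divisors := by
    ext d
    simp only [Finset.mem_filter, Nat.mem_divisors]
    constructor
    · rintro ⟨⟨hdN, _⟩, hpd⟩
      refine ⟨?_, hMpos.ne'⟩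
      have hcop : d.Coprime (p ^ v) :=
        Nat.Coprime.pow_right v ((hp.coprime_iff_not_dvd.mpr hpd).symm)
      exact hcop.dvd_of_dvd_mul_left (by rwa [hNeq])
    · rintro ⟨hdM, _⟩
      refine ⟨⟨hdM.trans (Nat.ordCompl_dvd N p), hN.ne'⟩, ?_⟩
      intro hpd
      exact Nat.not_dvd_ordCompl hp hN.ne' (hpd.trans hdM)
  rw [hfilter]
  have hsum : ∑ d ∈ M.divisors, moebius d = if M = 1 then 1 else 0 := by
    have := coe_mul_zeta_apply (f := (moebius : ArithmeticFunction ℤ)) (x := M)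
    rw [moebius_mul_coe_zeta] at this
    rw [← this, one_apply]
  have hiff : (M = 1) ↔ (∃ j : ℕ, N = p ^ j) := by
    constructor
    · intro h1
      exact ⟨v, by rw [← hNeq, h1, mul_one]⟩
    · rintro ⟨j, rfl⟩
      rw [hM, hv, hp.factorization_pow, Finsupp.single_eq_same, Nat.div_self (pow_pos hp.pos j)]
  calc ∑ d ∈ M.divisors, ((moebius d : ℤ):ℚ)
      = ((∑ d ∈ M.divisors, moebius d : ℤ) : ℚ) := by push_cast; rfl
    _ = if M = 1 then 1 else 0 := by rw [hsum]; split_ifs <;> simp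
    _ = _ := if_congr hiff rfl rfl

open scoped Classical in
lemma coeff_deriv_AHinner (p : ℕ) (m : ℕ) :
    coeff m (derivative ℚ (AHinner p)) = if ∃ j : ℕ, m + 1 = p ^ j then 1 else 0 := by
  rw [coeff_derivative, AHinner, coeff_mk]
  split_ifs with h
  · rw [one_div]
    have : ((m+1 : ℕ) : ℚ) ≠ 0 := by positivity
    push_cast at this ⊢
    field_simp
  · rw [zero_mul]

lemma coeff_v {d : ℕ} (hd : 0 < d) (c : ℚ) (m : ℕ) :
    coeff m (C c * X^(d-1) * geom d) = if d ∣ (m+1) then c else 0 := by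
  rw [mul_assoc, coeff_C_mul, coeff_X_pow_mul', geom, coeff_mk]
  by_cases h : d ∣ m + 1
  · have hle : d ≤ m + 1 := Nat.le_of_dvd (by omega) h
    rw [if_pos h, if_pos (by omega : d - 1 ≤ m), if_pos, mul_one]
    have : m - (d-1) = m + 1 - d := by omega
    rw [this]
    exact Nat.dvd_sub h dvd_rfl
  · rw [if_neg h]
    by_cases hle : d - 1 ≤ m
    · rw [if_pos hle, if_neg, mul_zero]
      intro hc
      have := Nat.dvd_add hc (dvd_refl d)
      rw [show m - (d-1) + d = m + 1 by omega] at this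
      exact h this
    · rw [if_neg hle, mul_zero]

end ArtinHasseAux

open PowerSeries ArithmeticFunction ArtinHasseAux in
/-- F(z) = Π_{d ≥ 1, p ∤ d} (1 − z^d)^{−μ(d)/d}, as an identity of formal power
series: every coefficient of F agrees with the corresponding coefficient of the (finite,
sufficiently deep) partial product, factors with d > n not affecting the n-th coefficient. -/
theorem artinHasse_prod_formula (p : ℕ) (hp : p.Prime) (n : ℕ) :
    coeff n (ArtinHasse p) =
      coeff n (∏ d ∈ (Finset.range (n + 1)).filter (fun d => 0 < d ∧ ¬ p ∣ d),
        OneSubZdPow (-(moebius d : ℚ) / d) d) := by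
  classical
  set S := (Finset.range (n + 1)).filter (fun d => 0 < d ∧ ¬ p ∣ d) with hS
  set F := ArtinHasse p with hF
  set G := ∏ d ∈ S, OneSubZdPow (-(moebius d : ℚ) / d) d with hG
  set U := ∑ d ∈ S, (C ((moebius d : ℤ) : ℚ) * X^(d-1) * geom d) with hU
  have hSmem : ∀ d ∈ S, 0 < d ∧ ¬ p ∣ d ∧ d < n + 1 := by
    intro d hd
    rw [hS, Finset.mem_filter, Finset.mem_range] at hd
    exact ⟨hd.2.1, hd.2.2, hd.1⟩
  -- derivative relation for G
  have hG' : derivative ℚ G = U * G := by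
    rw [hG, hU]
    apply deriv_prod
    intro d hd
    obtain ⟨hd0, -, -⟩ := hSmem d hd
    have hdQ : (d : ℚ) ≠ 0 := Nat.cast_ne_zero.mpr hd0.ne'
    have := deriv_OneSubZdPow (-(moebius d : ℚ) / d) hd0
    rw [this]
    congr 2
    field_simp
  -- derivative relation for F
  have hF' : derivative ℚ F = derivative ℚ (AHinner p) * F :=
    deriv_expOf (constantCoeff_AHinner p)
  -- coefficients of U and derivative AHinner agree below n
  have hUA : ∀ m, m < n → coeff m U = coeff m (derivative ℚ (AHinner p)) := by
    intro m hm
    rw [coeff_deriv_AHinner, hU, map_sum]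
    have hterm : ∀ d ∈ S, coeff m (C ((moebius d : ℤ) : ℚ) * X^(d-1) * geom d)
        = if d ∣ (m+1) then ((moebius d : ℤ) : ℚ) else 0 := by
      intro d hd
      exact coeff_v (hSmem d hd).1 _ m
    rw [Finset.sum_congr rfl hterm, Finset.sum_ite, Finset.sum_const_zero, add_zero]
    have hset : S.filter (fun d => d ∣ (m+1)) = (m+1).divisors.filter (fun d => ¬ p ∣ d) := by
      ext d
      simp only [hS, Finset.mem_filter, Finset.mem_range, Nat.mem_divisors]
      constructor
      · rintro ⟨⟨-, -, hpd⟩, hdvd⟩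
        exact ⟨⟨hdvd, by omega⟩, hpd⟩
      · rintro ⟨⟨hdvd, -⟩, hpd⟩
        have hd0 : 0 < d := Nat.pos_of_dvd_of_pos hdvd (by omega)
        have : d ≤ m + 1 := Nat.le_of_dvd (by omega) hdvd
        exact ⟨⟨by omega, hd0, hpd⟩, hdvd⟩
    rw [hset, moebius_filter_sum hp (by omega : 0 < m + 1)]
  -- constant coefficients agree
  have h0 : coeff 0 F = coeff 0 G := by
    have hFc : coeff 0 F = 1 := by
      rw [hF, ArtinHasse, PowerSeriesExpOf, coeff_mk]
      simp
    have hGc : coeff 0 G = 1 := by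
      rw [hG, coeff_zero_eq_constantCoeff_apply, map_prod]
      apply Finset.prod_eq_one
      intro d hd
      exact constantCoeff_OneSubZdPow _ (hSmem d hd).1
    rw [hFc, hGc]
  -- main induction
  have main : ∀ m, m ≤ n → coeff m F = coeff m G := by
    intro m
    induction m using Nat.strong_induction_on with
    | _ m ih =>
      intro hm
      match m with
      | 0 => exact h0
      | Nat.succ m =>
        have hne : ((m:ℚ)+1) ≠ 0 := by positivity
        apply mul_right_cancel₀ hne
        rw [← coeff_derivative, ← coeff_derivative, hF', hG', coeff_mul, coeff_mul]
        apply Finset.sum_congr rfl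
        intro ab hab
        have habm : ab.1 + ab.2 = m := Finset.HasAntidiagonal.mem_antidiagonal.mp hab
        rw [← hUA ab.1 (by omega), ih ab.2 (by omega) (by omega)]
  exact main n le_rfl
end

section
/- The Artin-Hasse exponential series F(z) = exp(Σ_{j≥0} z^{p^j}/p^j) has all coefficients in ℤ_(p), i.e. every coefficient is a rational number with denominator prime to p. -/
namespace AH
open PowerSeries Finset
lemma coeff_pow_eq_zero {R : Type*} [CommRing R] {f : R⟦X⟧} (hf : constantCoeff f = 0)
    {n k : ℕ} (h : n < k) : coeff n (f ^ k) = 0 := by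
  have hd : (X : R⟦X⟧) ^ k ∣ f ^ k := pow_dvd_pow_of_dvd (X_dvd_iff.mpr hf) k
  exact X_pow_dvd_iff.mp hd n h

lemma coeff_E (f : ℚ⟦X⟧) (n : ℕ) :
    coeff n (PowerSeriesExpOf f) =
      ∑ k ∈ range (n + 1), (1 / (Nat.factorial k : ℚ)) * coeff n (f ^ k) :=
  coeff_mk _ _

lemma coeff_E' (f : ℚ⟦X⟧) (hf : constantCoeff f = 0) {n N : ℕ} (h : n < N) :
    coeff n (PowerSeriesExpOf f) =
      ∑ k ∈ range N, (1 / (Nat.factorial k : ℚ)) * coeff n (f ^ k) := by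
  rw [coeff_E]
  refine Finset.sum_subset (by intro x hx; simp only [mem_range] at *; omega) ?_
  intro k hk hk'
  simp only [mem_range] at hk hk'
  rw [coeff_pow_eq_zero hf (by omega), mul_zero]

lemma E_zero : PowerSeriesExpOf 0 = 1 := by
  ext n
  rw [coeff_E]
  rcases Nat.eq_zero_or_pos n with rfl | hn
  · simp
  · rw [Finset.sum_eq_zero, coeff_one, if_neg hn.ne']
    intro k hk
    rcases Nat.eq_zero_or_pos k with rfl | hk0
    · simp [coeff_one, hn.ne']
    · rw [zero_pow hk0.ne', map_zero, mul_zero]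

lemma triangle_eq_square (M : ℕ → ℕ → ℚ) (n : ℕ) (h : ∀ i j, n < i + j → M i j = 0) :
    ∑ k ∈ range (n + 1), ∑ i ∈ range (k + 1), M i (k - i) =
      ∑ i ∈ range (n + 1), ∑ j ∈ range (n + 1), M i j := by
  rw [Finset.sum_sigma']
  rw [← Finset.sum_product']
  rw [← Finset.sum_filter_of_ne (p := fun ij : ℕ × ℕ => ij.1 + ij.2 ≤ n)
    (by intro x hx hne; by_contra hc; exact hne (h x.1 x.2 (by omega)))]
  refine Finset.sum_nbij' (fun x => (x.2, x.1 - x.2)) (fun y => ⟨y.1 + y.2, y.1⟩) ?_ ?_ ?_ ?_ ?_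
  · rintro ⟨k, i⟩ hx
    simp only [mem_sigma, mem_range] at hx
    simp only [mem_filter, mem_product, mem_range]
    omega
  · rintro ⟨i, j⟩ hy
    simp only [mem_filter, mem_product, mem_range] at hy
    simp only [mem_sigma, mem_range]
    omega
  · rintro ⟨k, i⟩ hx
    simp only [mem_sigma, mem_range] at hx
    simp only [Sigma.mk.inj_iff]
    exact ⟨by omega, heq_of_eq rfl⟩
  · rintro ⟨i, j⟩ hy
    simp
  · rintro ⟨k, i⟩ hx
    simp only [mem_sigma, mem_range] at hx
    congr 1

lemma E_mul (f g : ℚ⟦X⟧) (hf : constantCoeff f = 0) (hg : constantCoeff g = 0) :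
    PowerSeriesExpOf f * PowerSeriesExpOf g = PowerSeriesExpOf (f + g) := by
  ext n
  set M : ℕ → ℕ → ℚ :=
    fun i j => (1 / (i.factorial * j.factorial : ℚ)) * coeff n (f ^ i * g ^ j) with hM
  have hM0 : ∀ i j, n < i + j → M i j = 0 := by
    intro i j hij
    have hdvd : (X : ℚ⟦X⟧) ^ (i + j) ∣ f ^ i * g ^ j := by
      rw [pow_add]
      exact mul_dvd_mul (pow_dvd_pow_of_dvd (X_dvd_iff.mpr hf) i)
        (pow_dvd_pow_of_dvd (X_dvd_iff.mpr hg) j)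
    simp [hM, X_pow_dvd_iff.mp hdvd n hij]
  have hL : coeff n (PowerSeriesExpOf f * PowerSeriesExpOf g)
      = ∑ i ∈ range (n + 1), ∑ j ∈ range (n + 1), M i j := by
    rw [coeff_mul]
    rw [Finset.sum_congr rfl (fun ab hab =>
      by rw [coeff_E' f hf (Nat.lt_succ_of_le (Finset.HasAntidiagonal.antidiagonal.fst_le hab)),
             coeff_E' g hg (Nat.lt_succ_of_le (Finset.HasAntidiagonal.antidiagonal.snd_le hab)),
             Finset.sum_mul_sum])]
    rw [Finset.sum_comm]
    refine Finset.sum_congr rfl fun i _ => ?_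
    rw [Finset.sum_comm]
    refine Finset.sum_congr rfl fun j _ => ?_
    have : ∀ ab : ℕ × ℕ,
        (1 / (i.factorial : ℚ) * coeff ab.1 (f ^ i)) *
          (1 / (j.factorial : ℚ) * coeff ab.2 (g ^ j))
        = (1 / (i.factorial * j.factorial : ℚ)) *
            (coeff ab.1 (f ^ i) * coeff ab.2 (g ^ j)) := by
      intro ab; push_cast; ring
    rw [Finset.sum_congr rfl fun ab _ => this ab, ← Finset.mul_sum, ← coeff_mul]
  have hR : coeff n (PowerSeriesExpOf (f + g))
      = ∑ k ∈ range (n + 1), ∑ i ∈ range (k + 1), M i (k - i) := by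
    rw [coeff_E]
    refine Finset.sum_congr rfl fun k _ => ?_
    rw [add_pow, map_sum, Finset.mul_sum]
    refine Finset.sum_congr rfl fun i hi => ?_
    simp only [mem_range] at hi
    have hik : i ≤ k := by omega
    have hcast : ((k.choose i : ℕ) : ℚ⟦X⟧) = C ((k.choose i : ℕ) : ℚ) := by
      rw [← map_natCast C]
    rw [hcast, coeff_mul_C, hM]
    have hch : ((k.choose i : ℕ) : ℚ) = (k.factorial : ℚ) /
        ((i.factorial : ℚ) * ((k - i).factorial : ℚ)) := Nat.cast_choose ℚ hik
    rw [hch]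
    have h1 : (k.factorial : ℚ) ≠ 0 := Nat.cast_ne_zero.mpr (Nat.factorial_ne_zero k)
    have h2 : (i.factorial : ℚ) ≠ 0 := Nat.cast_ne_zero.mpr (Nat.factorial_ne_zero i)
    have h3 : (((k - i).factorial : ℕ) : ℚ) ≠ 0 := Nat.cast_ne_zero.mpr (Nat.factorial_ne_zero _)
    field_simp
  rw [hL, hR, triangle_eq_square M n hM0]

section expd
noncomputable def expd (p : ℕ) {R : Type*} [CommRing R] (f : R⟦X⟧) : R⟦X⟧ :=
  PowerSeries.mk fun n => if p ∣ n then coeff (n / p) f else 0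

variable {R : Type*} [CommRing R] {p : ℕ}

lemma coeff_expd (f : R⟦X⟧) (n : ℕ) :
    coeff n (expd p f) = if p ∣ n then coeff (n / p) f else 0 := coeff_mk _ _

lemma coeff_expd_mul_left (hp : 0 < p) (f : R⟦X⟧) (m : ℕ) :
    coeff (p * m) (expd p f) = coeff m f := by
  rw [coeff_expd, if_pos (dvd_mul_right p m), Nat.mul_div_cancel_left m hp]

lemma constantCoeff_expd (f : R⟦X⟧) :
    constantCoeff (expd p f) = constantCoeff f := by
  rw [← coeff_zero_eq_constantCoeff_apply, ← coeff_zero_eq_constantCoeff_apply, coeff_expd,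
    if_pos (dvd_zero p), Nat.zero_div]

lemma expd_one (hp : 0 < p) : expd p (1 : R⟦X⟧) = 1 := by
  ext n
  rw [coeff_expd]
  by_cases h : p ∣ n
  · rw [if_pos h, coeff_one, coeff_one]
    rcases Nat.eq_zero_or_pos n with rfl | hn
    · simp
    · obtain ⟨c, rfl⟩ := h
      have hc : c ≠ 0 := by rintro rfl; omega
      rw [Nat.mul_div_cancel_left c hp, if_neg hc, if_neg hn.ne']
  · rw [if_neg h, coeff_one, if_neg]
    rintro rfl
    exact h (dvd_zero p)

lemma expd_mul (hp : 0 < p) (f g : R⟦X⟧) : expd p (f * g) = expd p f * expd p g := by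
  ext n
  rw [coeff_mul]
  simp only [coeff_expd]
  by_cases hn : p ∣ n
  · obtain ⟨m, rfl⟩ := hn
    rw [if_pos (dvd_mul_right p m), Nat.mul_div_cancel_left m hp, coeff_mul]
    set s : Finset (ℕ × ℕ) := (antidiagonal m).image (fun ab => (p * ab.1, p * ab.2)) with hs
    have hsub : s ⊆ antidiagonal (p * m) := by
      intro x hx
      simp only [hs, mem_image, HasAntidiagonal.mem_antidiagonal] at hx
      obtain ⟨⟨a, b⟩, hab, rfl⟩ := hx
      simp only [HasAntidiagonal.mem_antidiagonal]
      simp only [] at hab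
      rw [← Nat.left_distrib, hab]
    rw [← Finset.sum_subset hsub (fun x hx hxs => ?_)]
    · rw [Finset.sum_image (fun a _ b _ hab => ?_)]
      · refine Finset.sum_congr rfl fun ab _ => ?_
        rw [if_pos (dvd_mul_right p ab.1), if_pos (dvd_mul_right p ab.2),
          Nat.mul_div_cancel_left _ hp, Nat.mul_div_cancel_left _ hp]
      · have h1 : a.1 = b.1 := by
          have := congrArg Prod.fst hab
          exact Nat.eq_of_mul_eq_mul_left hp (by simpa using this)
        have h2 : a.2 = b.2 := by
          have := congrArg Prod.snd hab
          exact Nat.eq_of_mul_eq_mul_left hp (by simpa using this)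
        exact Prod.ext h1 h2
    · by_cases h1 : p ∣ x.1
      · by_cases h2 : p ∣ x.2
        · exfalso
          obtain ⟨a, ha⟩ := h1; obtain ⟨b, hb⟩ := h2
          apply hxs
          have hx' : x.1 + x.2 = p * m := HasAntidiagonal.mem_antidiagonal.mp hx
          have hpab : p * (a + b) = p * m := by rw [Nat.left_distrib]; omega
          have hab : a + b = m := Nat.eq_of_mul_eq_mul_left hp hpab
          simp only [hs, mem_image, HasAntidiagonal.mem_antidiagonal]
          exact ⟨(a, b), hab, Prod.ext ha.symm hb.symm⟩
        · rw [if_neg h2, mul_zero]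
      · rw [if_neg h1, zero_mul]
  · rw [if_neg hn]
    refine (Finset.sum_eq_zero fun x hx => ?_).symm
    have hx' : x.1 + x.2 = n := HasAntidiagonal.mem_antidiagonal.mp hx
    by_cases h1 : p ∣ x.1
    · by_cases h2 : p ∣ x.2
      · exact absurd (hx' ▸ dvd_add h1 h2) hn
      · rw [if_neg h2, mul_zero]
    · rw [if_neg h1, zero_mul]

lemma expd_pow (hp : 0 < p) (f : R⟦X⟧) (k : ℕ) : expd p (f ^ k) = (expd p f) ^ k := by
  induction k with
  | zero => simpa using expd_one hp
  | succ k ih => rw [pow_succ, expd_mul hp, ih, pow_succ]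
end expd

lemma E_pow (f : ℚ⟦X⟧) (hf : constantCoeff f = 0) (m : ℕ) :
    (PowerSeriesExpOf f) ^ m = PowerSeriesExpOf (m • f) := by
  induction m with
  | zero => simpa using E_zero.symm
  | succ m ih =>
    have hmf : constantCoeff (m • f) = 0 := by
      rw [map_nsmul, hf, smul_zero]
    rw [pow_succ, ih, E_mul _ f hmf hf, succ_nsmul]

lemma expd_E {p : ℕ} (hp : 0 < p) (f : ℚ⟦X⟧) (hf : constantCoeff f = 0) :
    expd p (PowerSeriesExpOf f) = PowerSeriesExpOf (expd p f) := by
  ext n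
  have hterm : ∀ k : ℕ,
      coeff n ((expd p f) ^ k) = if p ∣ n then coeff (n / p) (f ^ k) else 0 := by
    intro k
    rw [← expd_pow hp, coeff_expd]
  rw [coeff_expd, coeff_E (expd p f) n]
  simp only [hterm]
  by_cases hn : p ∣ n
  · simp only [if_pos hn]
    rw [coeff_E' f hf (Nat.lt_succ_of_le (Nat.div_le_self n p))]
  · simp only [if_neg hn, mul_zero, Finset.sum_const_zero]

lemma constantCoeff_AHinner (p : ℕ) : constantCoeff (AHinner p) = 0 := by
  rw [← coeff_zero_eq_constantCoeff_apply, AHinner, coeff_mk]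
  split <;> simp

lemma key0 {p : ℕ} (hp : p.Prime) :
    p • AHinner p = expd p (AHinner p) + p • (X : ℚ⟦X⟧) := by
  have hp2 : 2 ≤ p := hp.two_le
  have hpQ : (p : ℚ) ≠ 0 := Nat.cast_ne_zero.mpr (by omega)
  ext n
  rw [map_add, map_nsmul, map_nsmul, coeff_expd, AHinner, coeff_mk, coeff_X]
  simp only [coeff_mk]
  rcases Nat.eq_zero_or_pos n with rfl | hn0
  · have h0 : ¬ ∃ j : ℕ, 0 = p ^ j := by
      rintro ⟨j, hj⟩
      exact (pow_ne_zero j (by omega : p ≠ 0)) hj.symm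
    rw [if_neg h0, if_pos (dvd_zero p), Nat.zero_div, if_neg h0]
    simp
  rcases eq_or_ne n 1 with rfl | hn1
  · have h1 : ∃ j : ℕ, 1 = p ^ j := ⟨0, (pow_zero p).symm⟩
    have hnd : ¬ p ∣ 1 := by rw [Nat.dvd_one]; omega
    rw [if_pos h1, if_neg hnd, if_pos rfl]
    simp
  · rw [if_neg hn1]
    by_cases hpow : ∃ j : ℕ, n = p ^ j
    · obtain ⟨j, rfl⟩ := hpow
      have hj0 : j ≠ 0 := by rintro rfl; simp at hn1
      obtain ⟨j', rfl⟩ := Nat.exists_eq_succ_of_ne_zero hj0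
      have hdvd : p ∣ p ^ (j' + 1) := dvd_pow_self p (by omega)
      have hdiv : p ^ (j' + 1) / p = p ^ j' := by
        rw [pow_succ, Nat.mul_div_cancel _ (by omega : 0 < p)]
      rw [if_pos ⟨j' + 1, rfl⟩, if_pos hdvd, hdiv, if_pos ⟨j', rfl⟩]
      rw [smul_zero, add_zero, nsmul_eq_mul]
      push_cast
      rw [pow_succ]
      field_simp
    · rw [if_neg hpow, smul_zero, add_zero]
      by_cases hdvd : p ∣ n
      · rw [if_pos hdvd]
        have : ¬ ∃ j : ℕ, n / p = p ^ j := by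
          rintro ⟨j, hj⟩
          exact hpow ⟨j + 1, by rw [pow_succ', ← hj, Nat.mul_div_cancel' hdvd]⟩
        rw [if_neg this]
      · rw [if_neg hdvd]

lemma coeff_E_pX (p n : ℕ) :
    coeff n (PowerSeriesExpOf (p • (X : ℚ⟦X⟧))) = (p : ℚ) ^ n / n.factorial := by
  rw [coeff_E]
  have hterm : ∀ k : ℕ, coeff n ((p • (X : ℚ⟦X⟧)) ^ k)
      = (p : ℚ) ^ k * (if n = k then 1 else 0) := by
    intro k
    rw [smul_pow, map_nsmul, coeff_X_pow, nsmul_eq_mul]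
    push_cast
    ring_nf
  simp only [hterm]
  rw [Finset.sum_eq_single n]
  · rw [if_pos rfl, mul_one, one_div, inv_mul_eq_div]
  · intro k _ hk
    rw [if_neg (Ne.symm hk), mul_zero, mul_zero]
  · intro h
    simp at h

lemma funEq {p : ℕ} (hp : p.Prime) :
    (ArtinHasse p) ^ p = expd p (ArtinHasse p) * PowerSeriesExpOf (p • (X : ℚ⟦X⟧)) := by
  have h0 : constantCoeff (AHinner p) = 0 := constantCoeff_AHinner p
  have hppos : 0 < p := hp.pos
  have h1 : constantCoeff (expd p (AHinner p)) = 0 := by rw [constantCoeff_expd, h0]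
  have h2 : constantCoeff (p • (X : ℚ⟦X⟧)) = 0 := by
    rw [map_nsmul, constantCoeff_X, smul_zero]
  rw [ArtinHasse, E_pow _ h0 p, key0 hp, ← E_mul _ _ h1 h2, expd_E hppos _ h0]

section padic

variable {p : ℕ} [hfp : Fact p.Prime]

lemma valNat_factorial_le {n : ℕ} (hn : 1 ≤ n) :
    padicValNat p n.factorial ≤ n - 1 := by
  have hleg := sub_one_mul_padicValNat_factorial (p := p) n
  have hs : 1 ≤ (p.digits n).sum := by
    have hne : p.digits n ≠ [] := Nat.digits_ne_nil_iff_ne_zero.mpr (by omega)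
    have hlast : (p.digits n).getLast hne ≠ 0 :=
      Nat.getLast_digit_ne_zero p (show n ≠ 0 by omega)
    have hmem : (p.digits n).getLast hne ∈ p.digits n := List.getLast_mem hne
    calc 1 ≤ (p.digits n).getLast hne := by omega
      _ ≤ (p.digits n).sum := List.single_le_sum (fun x _ => Nat.zero_le x) _ hmem
  have hp1 : 1 ≤ p - 1 := by have := hfp.out.two_le; omega
  calc padicValNat p n.factorial ≤ (p - 1) * padicValNat p n.factorial :=
        Nat.le_mul_of_pos_left _ (by omega)
    _ = n - (p.digits n).sum := hleg
    _ ≤ n - 1 := by omega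

lemma norm_epz {n : ℕ} (hn : 1 ≤ n) :
    ‖((((p : ℚ) ^ n / (n.factorial : ℚ)) : ℚ) : ℚ_[p])‖ ≤ (p : ℝ)⁻¹ := by
  have hp2 := hfp.out.two_le
  have hpQ : (p : ℚ) ≠ 0 := Nat.cast_ne_zero.mpr (by omega)
  have hfQ : ((n.factorial : ℕ) : ℚ) ≠ 0 := Nat.cast_ne_zero.mpr n.factorial_ne_zero
  have hq0 : ((p : ℚ) ^ n / (n.factorial : ℚ)) ≠ 0 := by positivity
  have hvp : padicValRat p ((p : ℚ) ^ n) = n := by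
    rw [padicValRat.pow (q := (p : ℚ)), padicValRat.self hfp.out.one_lt]
    simp
  have hvf : padicValRat p ((n.factorial : ℕ) : ℚ) = padicValNat p n.factorial :=
    padicValRat.of_nat
  have hval : 1 ≤ padicValRat p ((p : ℚ) ^ n / (n.factorial : ℚ)) := by
    rw [padicValRat.div (pow_ne_zero n hpQ) hfQ, hvp, hvf]
    have := valNat_factorial_le (p := p) hn
    omega
  rw [Padic.eq_padicNorm]
  have : padicNorm p ((p : ℚ) ^ n / (n.factorial : ℚ)) ≤ (p : ℚ)⁻¹ := by
    rw [padicNorm.eq_zpow_of_nonzero hq0]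
    have h1 : ((p : ℚ))⁻¹ = (p : ℚ) ^ (-1 : ℤ) := by simp
    rw [h1]
    apply zpow_le_zpow_right₀ (by exact_mod_cast hfp.out.one_le)
    omega
  calc ((padicNorm p ((p : ℚ) ^ n / (n.factorial : ℚ)) : ℚ) : ℝ)
      ≤ (((p : ℚ)⁻¹ : ℚ) : ℝ) := by exact_mod_cast this
    _ = (p : ℝ)⁻¹ := by push_cast; ring

end padic

section main

variable {p : ℕ} [hfp : Fact p.Prime]

lemma map_expd (f : ℚ⟦X⟧) :
    PowerSeries.map (Rat.castHom ℚ_[p]) (expd p f)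
      = expd p (PowerSeries.map (Rat.castHom ℚ_[p]) f) := by
  ext n
  rw [coeff_map, coeff_expd, coeff_expd, apply_ite (Rat.castHom ℚ_[p]), map_zero, coeff_map]

/-- The Artin–Hasse series with coefficients in `ℚ_[p]`. -/
noncomputable def Fp (p : ℕ) [Fact p.Prime] : PowerSeries ℚ_[p] :=
  PowerSeries.map (Rat.castHom ℚ_[p]) (ArtinHasse p)

/-- `exp(pX)` with coefficients in `ℚ_[p]`. -/
noncomputable def Ep (p : ℕ) [Fact p.Prime] : PowerSeries ℚ_[p] :=
  PowerSeries.map (Rat.castHom ℚ_[p]) (PowerSeriesExpOf (p • (X : ℚ⟦X⟧)))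

lemma funEqQp : (Fp p) ^ p = expd p (Fp p) * Ep p := by
  rw [Fp, Ep, ← map_pow, funEq hfp.out, map_mul, map_expd]

lemma coeff_Ep (n : ℕ) :
    coeff n (Ep p) = (((p : ℚ) ^ n / (n.factorial : ℚ) : ℚ) : ℚ_[p]) := by
  rw [Ep, coeff_map, coeff_E_pX]
  rfl

lemma coeff_Ep_zero : coeff 0 (Ep p) = 1 := by
  rw [coeff_Ep]
  norm_num

lemma norm_coeff_Ep {n : ℕ} (hn : 1 ≤ n) : ‖coeff n (Ep p)‖ ≤ (p : ℝ)⁻¹ := by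
  rw [coeff_Ep]
  exact norm_epz hn

lemma coeff_zero_AH : coeff 0 (ArtinHasse p) = 1 := by
  rw [ArtinHasse, coeff_E]
  simp

lemma coeff_zero_Fp : coeff 0 (Fp p) = 1 := by
  rw [Fp, coeff_map, coeff_zero_AH]
  simp

lemma poly_frob (f : Polynomial ℤ_[p]) (n : ℕ) :
    ‖(f ^ p).coeff n - (Polynomial.expand ℤ_[p] p f).coeff n‖ ≤ (p : ℝ)⁻¹ := by
  set d := (f ^ p).coeff n - (Polynomial.expand ℤ_[p] p f).coeff n with hd
  have hmap : PadicInt.toZMod d = 0 := by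
    have h1 : (f.map (PadicInt.toZMod)) ^ p
        = Polynomial.expand (ZMod p) p (f.map PadicInt.toZMod) := by
      rw [← Polynomial.map_frobenius_expand, ZMod.frobenius_zmod, Polynomial.map_id]
    have : PadicInt.toZMod d
        = ((f.map PadicInt.toZMod) ^ p).coeff n
          - (Polynomial.expand (ZMod p) p (f.map PadicInt.toZMod)).coeff n := by
      rw [hd, map_sub, ← Polynomial.coeff_map, ← Polynomial.coeff_map, Polynomial.map_pow,
        Polynomial.map_expand]
    rw [this, h1, sub_self]
  have hker : d ∈ RingHom.ker (PadicInt.toZMod (p := p)) := hmap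
  rw [PadicInt.ker_toZMod, PadicInt.maximalIdeal_eq_span_p] at hker
  have h3 : d ∈ Ideal.span {(p : ℤ_[p]) ^ 1} := by rwa [pow_one]
  have h4 := (PadicInt.norm_le_pow_iff_mem_span_pow d 1).mpr h3
  simpa using h4

end main

section mainind

variable {p : ℕ} [hfp : Fact p.Prime]

lemma norm_coeff_Fp_le_one (n : ℕ) : ‖coeff n (Fp p)‖ ≤ 1 := by
  induction n using Nat.strong_induction_on with
  | _ n IH =>
  rcases Nat.eq_zero_or_pos n with rfl | hn
  · rw [coeff_zero_Fp]; norm_num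
  have hp2 := hfp.out.two_le
  have hppos : 0 < p := hfp.out.pos
  set A : ℕ → ℚ_[p] := fun i => coeff i (Fp p) with hA
  set c : ℕ → ℤ_[p] := fun i => if h : i < n then (⟨A i, IH i h⟩ : ℤ_[p]) else 0 with hc
  set f : Polynomial ℤ_[p] := ∑ i ∈ range n, Polynomial.monomial i (c i) with hf
  have hfc : ∀ i, f.coeff i = if i < n then c i else 0 := by
    intro i
    rw [hf, Polynomial.finset_sum_coeff]
    simp only [Polynomial.coeff_monomial]
    rw [Finset.sum_ite_eq' (range n) i c]
    simp only [mem_range]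
  have hfcQ : ∀ i, ((f.coeff i : ℤ_[p]) : ℚ_[p]) = if i < n then A i else 0 := by
    intro i
    rw [hfc i]
    by_cases h : i < n
    · rw [if_pos h, if_pos h, hc]
      exact congrArg ((↑) : ℤ_[p] → ℚ_[p]) (dif_pos h)
    · rw [if_neg h, if_neg h]
      norm_num
  set G : PowerSeries ℚ_[p] := ((f.map (PadicInt.Coe.ringHom) : Polynomial ℚ_[p]) : PowerSeries ℚ_[p]) with hG
  have hGc : ∀ i, coeff i G = if i < n then A i else 0 := by
    intro i
    rw [hG, Polynomial.coeff_coe, Polynomial.coeff_map]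
    exact hfcQ i
  have hG0 : constantCoeff G = 1 := by
    rw [← coeff_zero_eq_constantCoeff_apply, hGc 0, if_pos hn, hA]
    exact coeff_zero_Fp
  set H : PowerSeries ℚ_[p] := Fp p - G with hH
  have hHc : ∀ i < n, coeff i H = 0 := by
    intro i hi
    rw [hH, map_sub, hGc i, if_pos hi, sub_self]
  have hHn : coeff n H = A n := by
    rw [hH, map_sub, hGc n, if_neg (lt_irrefl n), sub_zero, hA]
  have hXH : (X : PowerSeries ℚ_[p]) ^ n ∣ H := X_pow_dvd_iff.mpr hHc
  -- split the coefficient of Fp^p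
  have hsplit : coeff n ((Fp p) ^ p) = coeff n (G ^ p) + (p : ℚ_[p]) * A n := by
    have hFp : Fp p = H + G := by rw [hH]; ring
    rw [hFp, add_pow, map_sum]
    have h0mem : (0 : ℕ) ∈ range (p + 1) := by simp
    rw [← Finset.add_sum_erase _ _ h0mem]
    have h1mem : (1 : ℕ) ∈ (range (p + 1)).erase 0 := by
      simp only [mem_erase, mem_range]
      omega
    rw [← Finset.add_sum_erase _ _ h1mem]
    have hrest : ∑ k ∈ ((range (p + 1)).erase 0).erase 1,
        coeff n (H ^ k * G ^ (p - k) * ((p.choose k : ℕ) : PowerSeries ℚ_[p])) = 0 := by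
      refine Finset.sum_eq_zero fun k hk => ?_
      simp only [mem_erase, mem_range] at hk
      have hk2 : 2 ≤ k := by omega
      have hdvd : (X : PowerSeries ℚ_[p]) ^ (n + 1)
          ∣ H ^ k * G ^ (p - k) * ((p.choose k : ℕ) : PowerSeries ℚ_[p]) := by
        refine Dvd.dvd.mul_right (Dvd.dvd.mul_right ?_ _) _
        calc (X : PowerSeries ℚ_[p]) ^ (n + 1) ∣ X ^ (n * k) :=
              pow_dvd_pow X (by nlinarith)
          _ ∣ H ^ k := by
              have := pow_dvd_pow_of_dvd hXH k
              rwa [← pow_mul] at this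
      exact X_pow_dvd_iff.mp hdvd n (Nat.lt_succ_self n)
    rw [hrest, add_zero]
    have hterm0 : coeff n (H ^ 0 * G ^ (p - 0) * ((p.choose 0 : ℕ) : PowerSeries ℚ_[p]))
        = coeff n (G ^ p) := by
      rw [pow_zero, one_mul, Nat.sub_zero, Nat.choose_zero_right, Nat.cast_one, mul_one]
    have hterm1 : coeff n (H ^ 1 * G ^ (p - 1) * ((p.choose 1 : ℕ) : PowerSeries ℚ_[p]))
        = (p : ℚ_[p]) * A n := by
      have hcast : ((p.choose 1 : ℕ) : PowerSeries ℚ_[p]) = C ((p : ℕ) : ℚ_[p]) := by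
        rw [Nat.choose_one_right, ← map_natCast C]
      rw [hcast, coeff_mul_C, pow_one]
      have hmul : coeff n (H * G ^ (p - 1)) = A n := by
        rw [coeff_mul]
        rw [Finset.sum_eq_single ((n : ℕ), 0)]
        · rw [coeff_zero_eq_constantCoeff_apply, map_pow, hG0, one_pow, mul_one, hHn]
        · rintro ⟨a, b⟩ hab hne
          have hab' : a + b = n := HasAntidiagonal.mem_antidiagonal.mp hab
          have hbn : a < n := by
            by_contra hge
            push_neg at hge
            have ha : a = n := by omega
            have hb : b = 0 := by omega
            exact hne (by rw [ha, hb])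
          rw [hHc a hbn, zero_mul]
        · intro hmem
          exact absurd (HasAntidiagonal.mem_antidiagonal.mpr (by omega)) hmem
      rw [hmul, mul_comm]
    rw [hterm0, hterm1]
  -- Frobenius congruence for G
  have hfrob : ‖coeff n (G ^ p) - (if p ∣ n then A (n / p) else 0)‖ ≤ (p : ℝ)⁻¹ := by
    have hcoe : coeff n (G ^ p) = (((f ^ p).coeff n : ℤ_[p]) : ℚ_[p]) := by
      rw [hG, ← Polynomial.coe_pow, Polynomial.coeff_coe, ← Polynomial.map_pow,
        Polynomial.coeff_map]
      rfl
    have hexp : (((Polynomial.expand ℤ_[p] p f).coeff n : ℤ_[p]) : ℚ_[p])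
        = (if p ∣ n then A (n / p) else 0) := by
      rw [Polynomial.coeff_expand hppos]
      by_cases h : p ∣ n
      · rw [if_pos h, if_pos h]
        have hlt : n / p < n := Nat.div_lt_self hn hfp.out.one_lt
        rw [hfcQ (n / p), if_pos hlt]
      · rw [if_neg h, if_neg h]
        norm_num
    rw [hcoe, ← hexp, ← PadicInt.coe_sub, PadicInt.padic_norm_e_of_padicInt]
    exact poly_frob f n
  -- bound on the right-hand side
  have hrhs : ‖coeff n (expd p (Fp p) * Ep p) - (if p ∣ n then A (n / p) else 0)‖
      ≤ (p : ℝ)⁻¹ := by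
    rw [coeff_mul]
    have hmem : ((n, 0) : ℕ × ℕ) ∈ antidiagonal n := by simp
    rw [← Finset.add_sum_erase _ _ hmem]
    have h1 : coeff n (expd p (Fp p)) * coeff 0 (Ep p)
        = (if p ∣ n then A (n / p) else 0) := by
      rw [coeff_Ep_zero, mul_one, coeff_expd]
    rw [h1, add_sub_cancel_left]
    apply IsUltrametricDist.norm_sum_le_of_forall_le_of_nonneg
      (by positivity : (0 : ℝ) ≤ (p : ℝ)⁻¹)
    rintro ⟨a, b⟩ hab
    simp only [mem_erase, HasAntidiagonal.mem_antidiagonal, Ne, Prod.mk.injEq] at hab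
    obtain ⟨hne, habn⟩ := hab
    have hb1 : 1 ≤ b := by
      rcases Nat.eq_zero_or_pos b with rfl | h
      · exfalso; exact hne ⟨by omega, rfl⟩
      · exact h
    have han : a < n := by omega
    rw [norm_mul]
    have hbound1 : ‖coeff a (expd p (Fp p))‖ ≤ 1 := by
      rw [coeff_expd]
      by_cases h : p ∣ a
      · rw [if_pos h]
        exact IH (a / p) (lt_of_le_of_lt (Nat.div_le_self a p) han)
      · rw [if_neg h]; norm_num
    calc ‖coeff a (expd p (Fp p))‖ * ‖coeff b (Ep p)‖
        ≤ 1 * (p : ℝ)⁻¹ :=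
          mul_le_mul hbound1 (norm_coeff_Ep hb1) (norm_nonneg _) zero_le_one
      _ = (p : ℝ)⁻¹ := one_mul _
  -- combine
  have heq : (p : ℚ_[p]) * A n
      = (coeff n (expd p (Fp p) * Ep p) - (if p ∣ n then A (n / p) else 0))
        - (coeff n (G ^ p) - (if p ∣ n then A (n / p) else 0)) := by
    have hfun : coeff n ((Fp p) ^ p) = coeff n (expd p (Fp p) * Ep p) := by
      rw [funEqQp]
    rw [← hfun, hsplit]
    ring
  have hnorm : ‖(p : ℚ_[p]) * A n‖ ≤ (p : ℝ)⁻¹ := by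
    rw [heq, sub_eq_add_neg]
    refine le_trans (IsUltrametricDist.norm_add_le_max _ _) ?_
    rw [norm_neg]
    exact max_le hrhs hfrob
  have hpnorm : ‖((p : ℕ) : ℚ_[p])‖ = (p : ℝ)⁻¹ := Padic.norm_p
  rw [norm_mul, hpnorm] at hnorm
  have hppos' : (0 : ℝ) < (p : ℝ)⁻¹ := by positivity
  have h2 : (p : ℝ)⁻¹ * ‖A n‖ ≤ (p : ℝ)⁻¹ * 1 := by simpa using hnorm
  exact le_of_mul_le_mul_left h2 hppos'

end mainind

end AH

/-- every coefficient of the Artin–Hasse series lies in ℤ_(p), i.e. is a rational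
number whose denominator is prime to p. -/
theorem artinHasse_coeff_padic_integral (p : ℕ) (hp : p.Prime) (n : ℕ) :
    ¬ p ∣ (PowerSeries.coeff n (ArtinHasse p)).den := by
  haveI : Fact p.Prime := ⟨hp⟩
  intro hdvd
  set q : ℚ := PowerSeries.coeff n (ArtinHasse p) with hq
  have hnorm : ‖((q : ℚ) : ℚ_[p])‖ ≤ 1 := by
    have h := AH.norm_coeff_Fp_le_one (p := p) n
    rw [AH.Fp, PowerSeries.coeff_map] at h
    simpa using h
  have hunit : IsUnit ((q.den : ℤ_[p])) := PadicInt.isUnit_den q hnorm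
  obtain ⟨c, hc⟩ := hdvd
  rw [hc, Nat.cast_mul] at hunit
  have hup : IsUnit ((p : ℤ_[p])) := isUnit_of_mul_isUnit_left hunit
  rw [PadicInt.isUnit_iff, PadicInt.norm_p] at hup
  have hp1 : (1 : ℝ) < (p : ℝ) := by exact_mod_cast hp.one_lt
  have : (p : ℝ) = 1 := by
    have := congrArg (fun x : ℝ => x⁻¹) hup
    simpa using this
  linarith
end

section
/- In the ring of symmetric functions, for every n ≥ 1: p_n = (−1)^n · n · Σ_{λ ⊢ n} ((−1)^m / m) · (m choose r_1(λ), r_2(λ), …) · e_λ, where the sum is over partitions λ of n, m is the number of nonzero parts of λ, r_a(λ) is the number of parts of λ equal to a, and e_λ is the product of elementary symmetric functions over the parts of λ. -/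
open Finset

namespace PsumAux13

/-- The coefficient of `e_λ` in the expansion of `p_n`. -/
noncomputable def pw (n : ℕ) (μ : n.Partition) : ℚ :=
  (-1 : ℚ) ^ (n + μ.parts.card) * n * (Nat.factorial (μ.parts.card - 1)) /
    ∏ a ∈ μ.parts.toFinset, (Nat.factorial (μ.parts.count a) : ℚ)

/-- Remove one copy of the part `i` from a partition of `n`, giving a partition of `n - i`. -/
def erasePart (n i : ℕ) (lam : n.Partition) : (n - i).Partition :=
  if h : i ∈ lam.parts then
    ⟨lam.parts.erase i,
      fun hj => lam.parts_pos (Multiset.mem_of_mem_erase hj),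
      by
        have h2 := congrArg Multiset.sum (Multiset.cons_erase h)
        rw [Multiset.sum_cons, lam.parts_sum] at h2
        omega⟩
  else Nat.Partition.indiscrete (n - i)

lemma erasePart_parts {n i : ℕ} {lam : n.Partition} (h : i ∈ lam.parts) :
    (erasePart n i lam).parts = lam.parts.erase i := by
  rw [erasePart, dif_pos h]

lemma card_pos {n : ℕ} (hn : 1 ≤ n) (lam : n.Partition) : 0 < lam.parts.card := by
  rw [Multiset.card_pos]
  intro h0
  have := lam.parts_sum
  rw [h0] at this
  simp at this
  omega

lemma eq_indiscrete_of_card_le_one {n : ℕ} (hn : 1 ≤ n) (lam : n.Partition)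
    (h : lam.parts.card ≤ 1) : lam = Nat.Partition.indiscrete n := by
  have h1 : lam.parts.card = 1 := le_antisymm h (card_pos hn lam)
  obtain ⟨a, ha⟩ := Multiset.card_eq_one.1 h1
  have hs := lam.parts_sum
  rw [ha] at hs; simp at hs
  ext1
  rw [ha, hs, Nat.Partition.indiscrete_parts (by omega)]

lemma two_le_card {n : ℕ} (hn : 1 ≤ n) (lam : n.Partition)
    (h : lam ≠ Nat.Partition.indiscrete n) : 2 ≤ lam.parts.card := by
  by_contra h2
  exact h (eq_indiscrete_of_card_le_one hn lam (by omega))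

lemma part_le {n : ℕ} (lam : n.Partition) {i : ℕ} (hi : i ∈ lam.parts) : i ≤ n :=
  lam.parts_sum ▸ Multiset.le_sum_of_mem hi

lemma part_lt {n : ℕ} (lam : n.Partition) (h2 : 2 ≤ lam.parts.card) {i : ℕ}
    (hi : i ∈ lam.parts) : i < n := by
  have hsum := congrArg Multiset.sum (Multiset.cons_erase hi)
  rw [Multiset.sum_cons, lam.parts_sum] at hsum
  have hcard : 0 < (lam.parts.erase i).card := by
    rw [Multiset.card_erase_of_mem hi, Nat.pred_eq_sub_one]; omega
  obtain ⟨b, hb⟩ := Multiset.card_pos_iff_exists_mem.1 hcard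
  have hbpos : 0 < b := lam.parts_pos (Multiset.mem_of_mem_erase hb)
  have hble : b ≤ (lam.parts.erase i).sum := Multiset.le_sum_of_mem hb
  omega

/-- sum over distinct values of count * value = multiset sum -/
lemma sum_count_mul (s : Multiset ℕ) : ∑ a ∈ s.toFinset, s.count a * a = s.sum := by
  have h := Finset.sum_multiset_map_count s (id : ℕ → ℕ)
  simpa [smul_eq_mul] using h.symm

/-- the denominator product for the erased partition. -/
lemma prod_fact_erase {n i : ℕ} (lam : n.Partition) (hi : i ∈ lam.parts) :
    (lam.parts.count i) *
      ∏ a ∈ (lam.parts.erase i).toFinset, Nat.factorial ((lam.parts.erase i).count a) =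
      ∏ a ∈ lam.parts.toFinset, Nat.factorial (lam.parts.count a) := by
  have hsub : (lam.parts.erase i).toFinset ⊆ lam.parts.toFinset := by
    intro x hx
    exact Multiset.mem_toFinset.2 (Multiset.mem_of_mem_erase (Multiset.mem_toFinset.1 hx))
  have hext : ∏ a ∈ (lam.parts.erase i).toFinset, Nat.factorial ((lam.parts.erase i).count a) =
      ∏ a ∈ lam.parts.toFinset, Nat.factorial ((lam.parts.erase i).count a) := by
    refine (Finset.prod_subset hsub fun x _ hx => ?_)
    rw [Multiset.count_eq_zero_of_notMem (by simpa using hx)]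
    rfl
  rw [hext]
  have hmem : i ∈ lam.parts.toFinset := Multiset.mem_toFinset.2 hi
  rw [← Finset.mul_prod_erase _ _ hmem, ← Finset.mul_prod_erase _
      (fun a => Nat.factorial (lam.parts.count a)) hmem, ← mul_assoc]
  congr 1
  · rw [Multiset.count_erase_self, Nat.mul_factorial_pred (Multiset.count_pos.2 hi).ne']
  · exact Finset.prod_congr rfl fun x hx => by
      rw [Multiset.count_erase_of_ne (Finset.ne_of_mem_erase hx)]


lemma pw_indiscrete {n : ℕ} (hn : 1 ≤ n) :
    pw n (Nat.Partition.indiscrete n) = (-1 : ℚ) ^ (n + 1) * n := by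
  rw [pw, Nat.Partition.indiscrete_parts (by omega)]
  simp

lemma pw_step {n : ℕ} (hn : 1 ≤ n) (lam : n.Partition) (h2 : 2 ≤ lam.parts.card) {i : ℕ}
    (hi : i ∈ lam.parts.toFinset) :
    (-1:ℚ)^i * pw (n-i) (erasePart n i lam)
      = (-1:ℚ)^(n + lam.parts.card - 1) * (lam.parts.count i : ℚ) * ((n : ℚ) - (i : ℚ)) *
          (Nat.factorial (lam.parts.card - 2)) /
        ∏ a ∈ lam.parts.toFinset, (Nat.factorial (lam.parts.count a) : ℚ) := by
  have hi' : i ∈ lam.parts := Multiset.mem_toFinset.1 hi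
  have hile : i ≤ n := part_le lam hi'
  have hipos : 0 < i := lam.parts_pos hi'
  have hcard : (erasePart n i lam).parts.card = lam.parts.card - 1 := by
    rw [erasePart_parts hi', Multiset.card_erase_of_mem hi', Nat.pred_eq_sub_one]
  have hcount : 0 < lam.parts.count i := Multiset.count_pos.2 hi'
  rw [pw, hcard, erasePart_parts hi']
  have hprod := prod_fact_erase lam hi'
  have hprodQ : (∏ a ∈ (lam.parts.erase i).toFinset,
      (Nat.factorial ((lam.parts.erase i).count a) : ℚ)) =
      (∏ a ∈ lam.parts.toFinset, (Nat.factorial (lam.parts.count a) : ℚ)) /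
        (lam.parts.count i : ℚ) := by
    rw [eq_div_iff (by exact_mod_cast hcount.ne')]
    rw [mul_comm]
    exact_mod_cast congrArg (Nat.cast : ℕ → ℚ) hprod
  rw [hprodQ]
  have hexp : i + ((n - i) + (lam.parts.card - 1)) = n + lam.parts.card - 1 := by omega
  have hsub : ((n - i : ℕ) : ℚ) = (n : ℚ) - (i : ℚ) := Nat.cast_sub hile
  have hfact : lam.parts.card - 1 - 1 = lam.parts.card - 2 := by omega
  have hpow : (-1:ℚ)^(n + lam.parts.card - 1)
      = (-1:ℚ)^i * (-1:ℚ)^((n - i) + (lam.parts.card - 1)) := by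
    rw [← pow_add]
    exact congrArg _ hexp.symm
  have hPne : (∏ a ∈ lam.parts.toFinset, ((lam.parts.count a).factorial : ℚ)) ≠ 0 :=
    ne_of_gt (Finset.prod_pos fun a _ => by exact_mod_cast Nat.factorial_pos _)
  have hcne : ((lam.parts.count i : ℚ)) ≠ 0 := by exact_mod_cast hcount.ne'
  rw [hfact, hpow, hsub]
  field_simp

lemma pw_rec {n : ℕ} (hn : 1 ≤ n) (lam : n.Partition) (h2 : 2 ≤ lam.parts.card) :
    pw n lam = - ∑ i ∈ lam.parts.toFinset, (-1 : ℚ) ^ i * pw (n - i) (erasePart n i lam) := by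
  rw [Finset.sum_congr rfl (fun i hi => pw_step hn lam h2 hi)]
  set m := lam.parts.card with hm
  set P := ∏ a ∈ lam.parts.toFinset, (Nat.factorial (lam.parts.count a) : ℚ) with hP
  have hcnt : ∑ i ∈ lam.parts.toFinset, (lam.parts.count i : ℚ) * ((n : ℚ) - (i : ℚ))
      = (n : ℚ) * ((m : ℚ) - 1) := by
    have h1 : ∑ i ∈ lam.parts.toFinset, lam.parts.count i = m :=
      Multiset.toFinset_sum_count_eq _
    have hs : ∑ i ∈ lam.parts.toFinset, lam.parts.count i * i = n := by
      rw [sum_count_mul, lam.parts_sum]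
    have h1' : ∑ i ∈ lam.parts.toFinset, (lam.parts.count i : ℚ) = (m : ℚ) := by
      exact_mod_cast congrArg (Nat.cast : ℕ → ℚ) h1
    have hs' : ∑ i ∈ lam.parts.toFinset, (lam.parts.count i : ℚ) * (i : ℚ) = (n : ℚ) := by
      exact_mod_cast congrArg (Nat.cast : ℕ → ℚ) hs
    calc ∑ i ∈ lam.parts.toFinset, (lam.parts.count i : ℚ) * ((n : ℚ) - (i : ℚ))
        = ∑ i ∈ lam.parts.toFinset,
            ((lam.parts.count i : ℚ) * (n:ℚ) - (lam.parts.count i : ℚ) * (i:ℚ)) := by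
          exact Finset.sum_congr rfl fun i _ => by ring
      _ = (∑ i ∈ lam.parts.toFinset, (lam.parts.count i : ℚ)) * (n : ℚ)
            - ∑ i ∈ lam.parts.toFinset, (lam.parts.count i : ℚ) * (i : ℚ) := by
          rw [Finset.sum_sub_distrib, Finset.sum_mul]
      _ = (n : ℚ) * ((m : ℚ) - 1) := by rw [h1', hs']; ring
  have hsum : ∑ i ∈ lam.parts.toFinset,
      (-1:ℚ)^(n + m - 1) * (lam.parts.count i : ℚ) * ((n : ℚ) - (i : ℚ)) *
        (Nat.factorial (m - 2)) / P
      = (-1:ℚ)^(n + m - 1) * ((n : ℚ) * ((m : ℚ) - 1)) * (Nat.factorial (m - 2)) / P := by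
    rw [← hcnt, ← Finset.sum_div, ← Finset.sum_mul, Finset.mul_sum]
    exact congrArg (· / P) (congrArg (· * ((Nat.factorial (m - 2)) : ℚ))
      (Finset.sum_congr rfl fun i _ => by ring))
  rw [hsum, pw, ← hm, ← hP]
  have hpow : (-1:ℚ)^(n + m) = -(-1:ℚ)^(n + m - 1) := by
    have h := pow_succ (-1:ℚ) (n + m - 1)
    have he : n + m - 1 + 1 = n + m := by omega
    rw [he] at h
    rw [h]; ring
  have hfac : ((m - 1).factorial : ℚ) = ((m:ℚ) - 1) * ((m - 2).factorial : ℚ) := by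
    have h0 : 0 < m - 1 := by omega
    have := Nat.mul_factorial_pred h0.ne'
    have h21 : m - 1 - 1 = m - 2 := by omega
    rw [h21] at this
    have hcast : (((m - 1) * (m - 2).factorial : ℕ) : ℚ) = ((m-1).factorial : ℚ) := by
      exact_mod_cast congrArg (Nat.cast : ℕ → ℚ) this
    rw [← hcast]
    push_cast [Nat.cast_sub (by omega : 1 ≤ m)]
    ring
  rw [hpow, hfac]
  ring


/-- Add a part to a partition. -/
def consPart {n i k : ℕ} (hi : 0 < i) (h : i + k = n) (μ : k.Partition) : n.Partition :=
  ⟨i ::ₘ μ.parts,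
    fun hj => by
      rcases Multiset.mem_cons.1 hj with rfl | hj
      exacts [hi, μ.parts_pos hj],
    by rw [Multiset.sum_cons, μ.parts_sum]; exact h⟩

open MvPolynomial in
lemma esymm_mul_erase {σ : Type*} [Fintype σ] [DecidableEq σ] {n i : ℕ} (lam : n.Partition)
    (hi : i ∈ lam.parts) :
    esymm σ ℚ i * esymmPart σ ℚ (erasePart n i lam) = esymmPart σ ℚ lam := by
  rw [esymmPart, esymmPart, erasePart_parts hi]
  conv_rhs => rw [← Multiset.cons_erase hi]
  rw [Multiset.map_cons, Multiset.prod_cons]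

open MvPolynomial in
lemma main (σ : Type*) [Fintype σ] [DecidableEq σ] (n : ℕ) :
    1 ≤ n → psum σ ℚ n = ∑ lam : n.Partition, C (pw n lam) * esymmPart σ ℚ lam := by
  induction n using Nat.strong_induction_on with
  | _ n ih =>
  intro hn
  rw [psum_eq_mul_esymm_sub_sum σ ℚ n hn]
  have hrw : ∑ a ∈ Finset.HasAntidiagonal.antidiagonal n with a.1 ∈ Set.Ioo 0 n,
      (-1 : MvPolynomial σ ℚ) ^ a.1 * esymm σ ℚ a.1 * psum σ ℚ a.2
      = ∑ a ∈ Finset.HasAntidiagonal.antidiagonal n with a.1 ∈ Set.Ioo 0 n, ∑ μ : a.2.Partition,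
          (-1 : MvPolynomial σ ℚ) ^ a.1 * esymm σ ℚ a.1 * (C (pw a.2 μ) * esymmPart σ ℚ μ) := by
    refine Finset.sum_congr rfl fun a ha => ?_
    rw [Finset.mem_filter, Finset.HasAntidiagonal.mem_antidiagonal, Set.mem_Ioo] at ha
    rw [ih a.2 (by omega) (by omega), Finset.mul_sum]
  rw [hrw, Finset.sum_sigma']
  have hbij : ∑ x ∈ ((Finset.HasAntidiagonal.antidiagonal n).filter fun a => a.1 ∈ Set.Ioo 0 n).sigma
        (fun a => (Finset.univ : Finset a.2.Partition)),
      (-1 : MvPolynomial σ ℚ) ^ x.1.1 * esymm σ ℚ x.1.1 * (C (pw x.1.2 x.2) * esymmPart σ ℚ x.2)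
      = ∑ x ∈ (Finset.univ : Finset n.Partition).sigma
          (fun lam => lam.parts.toFinset.filter (· < n)),
        (-1 : MvPolynomial σ ℚ) ^ x.2 * esymm σ ℚ x.2 *
          (C (pw (n - x.2) (erasePart n x.2 x.1)) * esymmPart σ ℚ (erasePart n x.2 x.1)) := by
    refine (Finset.sum_bij (fun x hx => ⟨(x.2, n - x.2), erasePart n x.2 x.1⟩) ?_ ?_ ?_ ?_).symm
    · rintro ⟨lam, i⟩ hx
      dsimp only
      rw [Finset.mem_sigma, Finset.mem_filter, Multiset.mem_toFinset] at hx
      dsimp only at hx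
      obtain ⟨-, hi, hilt⟩ := hx
      have hile : i ≤ n := part_le lam hi
      rw [Finset.mem_sigma, Finset.mem_filter, Finset.HasAntidiagonal.mem_antidiagonal, Set.mem_Ioo]
      dsimp only
      exact ⟨⟨by omega, lam.parts_pos hi, hilt⟩, Finset.mem_univ _⟩
    · rintro ⟨lam, i⟩ hx ⟨lam', i'⟩ hx' heq
      rw [Finset.mem_sigma, Finset.mem_filter, Multiset.mem_toFinset] at hx hx'
      dsimp only at hx hx' heq
      obtain ⟨-, hi, -⟩ := hx
      obtain ⟨-, hi', -⟩ := hx'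
      injection heq with h1 h2
      obtain rfl : i = i' := congrArg Prod.fst h1
      have h2' : erasePart n i lam = erasePart n i lam' := heq_iff_eq.1 h2
      have hparts : lam.parts = lam'.parts := by
        have e1 := erasePart_parts (lam := lam) hi
        have e2 := erasePart_parts (lam := lam') hi'
        rw [← Multiset.cons_erase hi, ← Multiset.cons_erase hi', ← e1, ← e2, h2']
      obtain rfl : lam = lam' := Nat.Partition.ext hparts
      rfl
    · rintro ⟨⟨a1, a2⟩, μ⟩ hy
      rw [Finset.mem_sigma, Finset.mem_filter, Finset.HasAntidiagonal.mem_antidiagonal, Set.mem_Ioo] at hy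
      dsimp only at hy μ
      obtain ⟨⟨hsum, h0, hlt⟩, -⟩ := hy
      obtain rfl : a2 = n - a1 := by omega
      refine ⟨⟨consPart h0 (by omega) μ, a1⟩, ?_, ?_⟩
      · rw [Finset.mem_sigma, Finset.mem_filter, Multiset.mem_toFinset]
        exact ⟨Finset.mem_univ _, Multiset.mem_cons_self _ _, hlt⟩
      · have hmem : a1 ∈ (consPart h0 (by omega : a1 + (n - a1) = n) μ).parts :=
          Multiset.mem_cons_self _ _
        dsimp only
        have h2 : erasePart n a1 (consPart h0 (by omega : a1 + (n - a1) = n) μ) = μ := by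
          apply Nat.Partition.ext
          rw [erasePart_parts hmem]
          exact Multiset.erase_cons_head _ _
        exact congrArg (Sigma.mk ((a1, n - a1) : ℕ × ℕ)) h2
    · rintro ⟨lam, i⟩ hx
      rfl
  rw [hbij, Finset.sum_sigma]
  have hind : (-1 : MvPolynomial σ ℚ) ^ (n + 1) * (n : MvPolynomial σ ℚ) * esymm σ ℚ n
      = ∑ lam : n.Partition, (if lam = Nat.Partition.indiscrete n then
          (-1 : MvPolynomial σ ℚ) ^ (n + 1) * (n : MvPolynomial σ ℚ) * esymm σ ℚ n else 0) := by
    rw [Finset.sum_ite_eq' Finset.univ (Nat.Partition.indiscrete n)]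
    simp
  rw [hind, ← Finset.sum_sub_distrib]
  refine Finset.sum_congr rfl fun lam _ => ?_
  by_cases hl : lam = Nat.Partition.indiscrete n
  · subst hl
    rw [if_pos rfl]
    have hfil : (Nat.Partition.indiscrete n).parts.toFinset.filter (· < n) = ∅ := by
      rw [Nat.Partition.indiscrete_parts (by omega)]
      ext x
      simp only [Finset.mem_filter, Multiset.toFinset_singleton, Finset.mem_singleton,
        Finset.notMem_empty, iff_false, not_and]
      rintro rfl
      omega
    rw [hfil, Finset.sum_empty, sub_zero, pw_indiscrete hn, esymmPart_indiscrete]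
    rw [map_mul, map_pow, map_neg, map_one, map_natCast]
  · rw [if_neg hl]
    have h2 := two_le_card hn lam hl
    have hfil : lam.parts.toFinset.filter (· < n) = lam.parts.toFinset :=
      Finset.filter_true_of_mem fun i hi => part_lt lam h2 (Multiset.mem_toFinset.1 hi)
    rw [hfil, zero_sub]
    have hterm : ∀ i ∈ lam.parts.toFinset,
        (-1 : MvPolynomial σ ℚ) ^ i * esymm σ ℚ i *
          (C (pw (n - i) (erasePart n i lam)) * esymmPart σ ℚ (erasePart n i lam))
        = C ((-1 : ℚ) ^ i * pw (n - i) (erasePart n i lam)) * esymmPart σ ℚ lam := by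
      intro i hi
      have hi' : i ∈ lam.parts := Multiset.mem_toFinset.1 hi
      rw [← esymm_mul_erase lam hi', map_mul, map_pow, map_neg, map_one]
      ring
    rw [Finset.sum_congr rfl hterm, ← Finset.sum_mul, ← map_sum, pw_rec hn lam h2, map_neg,
      neg_mul]

end PsumAux13

open MvPolynomial in
/-- in the ring of symmetric functions (equivalently, in every finite number of
variables, for all n ≥ 1), p_n = (−1)^n · n · Σ_{λ ⊢ n} ((−1)^m / m) · (m choose r_1(λ), r_2(λ), …) · e_λ,
where m = #parts(λ) and the multinomial coefficient is m!/(Π_a r_a(λ)!). -/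
theorem psum_eq_sum_partitions_esymm (σ : Type*) [Fintype σ] [DecidableEq σ] (n : ℕ)
    (hn : 1 ≤ n) :
    psum σ ℚ n =
      C ((-1 : ℚ) ^ n * (n : ℚ)) *
        ∑ lam : n.Partition,
          C ((-1 : ℚ) ^ lam.parts.card / (lam.parts.card : ℚ) *
              ((Nat.factorial lam.parts.card : ℚ) /
                lam.parts.toFinset.prod fun a => (Nat.factorial (lam.parts.count a) : ℚ))) *
            esymmPart σ ℚ lam := by
  rw [PsumAux13.main σ n hn, Finset.mul_sum]
  refine Finset.sum_congr rfl fun lam _ => ?_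
  rw [← mul_assoc, ← map_mul]
  congr 1
  have hm : 0 < lam.parts.card := PsumAux13.card_pos hn lam
  have hmne : ((lam.parts.card : ℚ)) ≠ 0 := by exact_mod_cast hm.ne'
  have hPne : (∏ a ∈ lam.parts.toFinset, ((lam.parts.count a).factorial : ℚ)) ≠ 0 :=
    ne_of_gt (Finset.prod_pos fun a _ => by exact_mod_cast Nat.factorial_pos _)
  have hfac : ((lam.parts.card.factorial : ℕ) : ℚ)
      = (lam.parts.card : ℚ) * ((lam.parts.card - 1).factorial : ℚ) := by
    exact_mod_cast congrArg (Nat.cast : ℕ → ℚ) (Nat.mul_factorial_pred hm.ne').symm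
  rw [PsumAux13.pw, pow_add, hfac]
  field_simp
end

section
/- For nonnegative integers r_1, r_2, … (almost all zero) with m = Σ_a r_a and n = Σ_a a·r_a ≥ 1, the rational number (n/m)·(m choose r_1, r_2, …) is an integer. -/
lemma aux_dvd (s : Finset ℕ) (f : ℕ → ℕ) (a : ℕ) (ha : a ∈ s) (hf : 1 ≤ f a) :
    (∑ i ∈ s, f i) ∣ f a * Nat.multinomial s f := by
  classical
  set f' := Function.update f a (f a - 1) with hf'
  have herase : ∀ i ∈ s.erase a, f' i = f i := fun i hi =>
    Function.update_of_ne (Finset.mem_erase.mp hi).1 _ f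
  have hfa : f' a = f a - 1 := Function.update_self a _ f
  have p3 : ∏ i ∈ s.erase a, Nat.factorial (f' i) = ∏ i ∈ s.erase a, Nat.factorial (f i) :=
    Finset.prod_congr rfl fun i hi => by rw [herase i hi]
  have hprod : ∏ i ∈ s, Nat.factorial (f i) = f a * ∏ i ∈ s, Nat.factorial (f' i) := by
    rw [← Finset.mul_prod_erase s (fun i => Nat.factorial (f i)) ha,
      ← Finset.mul_prod_erase s (fun i => Nat.factorial (f' i)) ha]
    simp only [p3, hfa, ← mul_assoc]
    congr 1
    exact (Nat.mul_factorial_pred (by omega : f a ≠ 0)).symm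
  have hsum : ∑ i ∈ s, f i = (∑ i ∈ s, f' i) + 1 := by
    have e1 : ∑ i ∈ s, f i = f a + ∑ i ∈ s.erase a, f i := (Finset.add_sum_erase s f ha).symm
    have e2 : ∑ i ∈ s, f' i = (f a - 1) + ∑ i ∈ s.erase a, f i := by
      rw [← Finset.add_sum_erase s f' ha, hfa, Finset.sum_congr rfl herase]
    rw [e1, e2]
    omega
  have key : f a * Nat.multinomial s f = (∑ i ∈ s, f i) * Nat.multinomial s f' := by
    have hpos : 0 < ∏ i ∈ s, Nat.factorial (f' i) := Finset.prod_pos fun i _ => Nat.factorial_pos _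
    apply Nat.eq_of_mul_eq_mul_right hpos
    calc f a * Nat.multinomial s f * ∏ i ∈ s, Nat.factorial (f' i)
        = Nat.multinomial s f * (f a * ∏ i ∈ s, Nat.factorial (f' i)) := by ring
      _ = (∏ i ∈ s, Nat.factorial (f i)) * Nat.multinomial s f := by rw [← hprod]; ring
      _ = Nat.factorial (∑ i ∈ s, f i) := Nat.multinomial_spec s f
      _ = (∑ i ∈ s, f i) * Nat.factorial (∑ i ∈ s, f' i) := by
          rw [hsum, Nat.factorial_succ]
      _ = (∑ i ∈ s, f i) * ((∏ i ∈ s, Nat.factorial (f' i)) * Nat.multinomial s f') := by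
          rw [Nat.multinomial_spec s f']
      _ = (∑ i ∈ s, f i) * Nat.multinomial s f' * ∏ i ∈ s, Nat.factorial (f' i) := by ring
  exact ⟨Nat.multinomial s f', key⟩

/-- for finitely supported nonnegative integers r : ℕ →₀ ℕ with m = Σ_a r_a and
n = Σ_a a·r_a ≥ 1, the rational number (n/m)·(m choose r_1, r_2, …) is an integer, i.e.
m divides n · multinomial(r). -/
theorem weight_div_card_mul_multinomial_int (r : ℕ →₀ ℕ)
    (hn : 1 ≤ r.sum fun a k => a * k) :
    (r.sum fun _ k => k) ∣ (r.sum fun a k => a * k) * Nat.multinomial r.support r := by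
  rw [Finsupp.sum, Finsupp.sum, Finset.sum_mul]
  apply Finset.dvd_sum
  intro a ha
  have hra : 1 ≤ r a := Nat.one_le_iff_ne_zero.mpr (Finsupp.mem_support_iff.mp ha)
  have := aux_dvd r.support r a ha hra
  calc (∑ i ∈ r.support, r i) ∣ r a * Nat.multinomial r.support r := this
    _ ∣ a * r a * Nat.multinomial r.support r := ⟨a, by ring⟩
end

section
/- Let p be a prime, A a torsion-free ℤ_(p)-algebra, 𝔞 ⊆ A a divided-power ideal, and P, Q monic polynomials in A[X]. Fix N ≥ 1. If e_n(P) ≡ e_n(Q) mod 𝔞 for all 1 ≤ n ≤ N, then p_N(P) ≡ p_N(Q) mod N·𝔞. Here e_n(P) is (−1)^n times the coefficient of X^{deg P − n} in P (and 0 for n > deg P), and p_N(P) is the N-th power-sum of the roots of P, expressed as the universal integer polynomial in the e_n via Newton's identities. -/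
/-- `esymmOfPoly P n` is the n-th elementary symmetric function of the roots of a monic
polynomial P: (−1)^n times the coefficient of X^{deg P − n}, and 0 for n > deg P. -/
def esymmOfPoly {A : Type*} [CommRing A] (P : Polynomial A) (n : ℕ) : A :=
  if n ≤ P.natDegree then (-1 : A) ^ n * P.coeff (P.natDegree - n) else 0

/-- `newtonPower e n` is the n-th power sum expressed via Newton's identities
p_n = (−1)^{n−1} n e_n + Σ_{i=1}^{n−1} (−1)^{i−1} e_i p_{n−i}
as the universal integer polynomial in the elementary symmetric functions e. -/
def newtonPower {A : Type*} [CommRing A] (e : ℕ → A) : ℕ → A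
  | 0 => 0
  | n + 1 => (-1 : A) ^ n * (n + 1 : ℕ) * e (n + 1) +
      ∑ i ∈ Finset.range n, (-1 : A) ^ i * e (i + 1) * newtonPower e (n - i)
  decreasing_by exact Nat.lt_succ_of_le (Nat.sub_le n i)

open PowerSeries Finset

namespace DPProof

variable {A : Type*} [CommRing A]

/-- Power sums directly from the coefficient sequence of a power series with constant term 1. -/
def pSeq (c : ℕ → A) : ℕ → A
  | 0 => 0
  | n + 1 => -((n + 1 : ℕ) : A) * c (n + 1) -
      ∑ i ∈ Finset.range n, c (i + 1) * pSeq c (n - i)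
  decreasing_by exact Nat.lt_succ_of_le (Nat.sub_le n i)

theorem pSeq_zero (c : ℕ → A) : pSeq c 0 = 0 := by rw [pSeq]

theorem pSeq_succ (c : ℕ → A) (n : ℕ) : pSeq c (n+1) =
    -((n + 1 : ℕ) : A) * c (n + 1) - ∑ i ∈ Finset.range n, c (i + 1) * pSeq c (n - i) := by
  rw [pSeq]

theorem newtonPower_zero (e : ℕ → A) : newtonPower e 0 = 0 := by rw [newtonPower]

theorem newtonPower_succ (e : ℕ → A) (n : ℕ) :
    newtonPower e (n+1) = (-1 : A) ^ n * (n + 1 : ℕ) * e (n + 1) +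
      ∑ i ∈ Finset.range n, (-1 : A) ^ i * e (i + 1) * newtonPower e (n - i) := by
  rw [newtonPower]

theorem newtonPower_eq_pSeq (e : ℕ → A) (n : ℕ) :
    newtonPower e n = pSeq (fun j => (-1 : A) ^ j * e j) n := by
  induction n using Nat.strong_induction_on with
  | _ n ih =>
    match n with
    | 0 => rw [newtonPower_zero, pSeq_zero]
    | n + 1 =>
      rw [newtonPower_succ, pSeq_succ]
      have h2 : ∀ i ∈ Finset.range n,
          ((fun j => (-1:A)^j * e j) (i+1)) * pSeq (fun j => (-1:A)^j * e j) (n-i)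
            = -((-1:A)^i * e (i+1) * newtonPower e (n-i)) := by
        intro i hi
        rw [← ih (n-i) (Nat.lt_succ_of_le (Nat.sub_le n i))]
        show (-1:A)^(i+1) * e (i+1) * newtonPower e (n-i) = _
        rw [pow_succ]; ring
      rw [Finset.sum_congr rfl h2, Finset.sum_neg_distrib, sub_neg_eq_add]
      congr 1
      rw [pow_succ]; ring

theorem pSeq_congr : ∀ (n : ℕ) (c c' : ℕ → A),
    (∀ i, 1 ≤ i → i ≤ n → c i = c' i) → pSeq c n = pSeq c' n := by
  intro n
  induction n using Nat.strong_induction_on with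
  | _ n ih =>
    intro c c' h
    match n with
    | 0 => rw [pSeq_zero, pSeq_zero]
    | n + 1 =>
      rw [pSeq_succ, pSeq_succ, h (n+1) (by omega) le_rfl]
      congr 1
      refine Finset.sum_congr rfl fun i hi => ?_
      have hi' := Finset.mem_range.mp hi
      rw [h (i+1) (by omega) (by omega),
        ih (n-i) (by omega) c c' (fun j h1 h2 => h j h1 (by omega))]

theorem pSeq_eq_zero (c : ℕ → A) (n : ℕ) (h : ∀ i, 1 ≤ i → i ≤ n → c i = 0) :
    pSeq c n = 0 := by
  match n with
  | 0 => rw [pSeq_zero]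
  | n + 1 =>
    rw [pSeq_succ, h (n+1) (by omega) le_rfl]
    have : ∀ i ∈ Finset.range n, c (i+1) * pSeq c (n-i) = 0 := by
      intro i hi
      have hi' := Finset.mem_range.mp hi
      rw [h (i+1) (by omega) (by omega), zero_mul]
    rw [Finset.sum_congr rfl this, Finset.sum_const_zero]
    ring

theorem pSeq_single (x : A) (d : ℕ) (hd : 1 ≤ d) (c : ℕ → A)
    (hc : ∀ j, 1 ≤ j → c j = if j = d then -x else 0) :
    ∀ n, 1 ≤ n → pSeq c n = if d ∣ n then (d : A) * x ^ (n / d) else 0 := by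
  intro n
  induction n using Nat.strong_induction_on with
  | _ n ih =>
    intro hn
    match n, hn with
    | n + 1, _ =>
      rw [pSeq_succ]
      have hsum : ∑ i ∈ Finset.range n, c (i + 1) * pSeq c (n - i)
          = if d ≤ n then -x * pSeq c (n + 1 - d) else 0 := by
        rcases le_or_gt d n with hdn | hdn
        · rw [Finset.sum_eq_single (d - 1)]
          · rw [if_pos hdn]
            have e1 : d - 1 + 1 = d := by omega
            have e2 : n - (d - 1) = n + 1 - d := by omega
            rw [e1, e2, hc d hd, if_pos rfl]
          · intro b hb hbne
            have hb' := Finset.mem_range.mp hb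
            rw [hc (b+1) (by omega) , if_neg (by omega), zero_mul]
          · intro hmem
            exact absurd (Finset.mem_range.mpr (by omega)) hmem
        · rw [if_neg (by omega)]
          refine Finset.sum_eq_zero fun i hi => ?_
          have hi' := Finset.mem_range.mp hi
          rw [hc (i+1) (by omega), if_neg (by omega), zero_mul]
      rw [hsum]
      rcases eq_or_ne (n+1) d with heq | hne
      · rw [hc (n+1) (by omega), if_pos heq, if_neg (by omega), if_pos (heq ▸ dvd_refl d),
          heq, Nat.div_self (by omega), pow_one]
        push_cast
        ring
      · rw [hc (n+1) (by omega), if_neg hne]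
        rcases le_or_gt d n with hdn | hdn
        · rw [if_pos hdn, ih (n+1-d) (by omega) (by omega)]
          have hdvd_iff : d ∣ n + 1 ↔ d ∣ n + 1 - d := by
            constructor
            · intro hdv; exact (Nat.dvd_sub hdv dvd_rfl)
            · intro hdv
              have : n + 1 = (n + 1 - d) + d := by omega
              rw [this]; exact Nat.dvd_add hdv dvd_rfl
          by_cases hdvd : d ∣ n + 1
          · rw [if_pos (hdvd_iff.mp hdvd), if_pos hdvd]
            have e3 : (n + 1) / d = (n + 1 - d) / d + 1 := by
              conv_lhs => rw [show n + 1 = (n + 1 - d) + d by omega]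
              rw [Nat.add_div_right _ (by omega)]
            rw [e3, pow_succ]
            ring
          · rw [if_neg (fun hh => hdvd (hdvd_iff.mpr hh)), if_neg hdvd]
            ring
        · rw [if_neg (by omega), if_neg (by
            intro hdvd
            have := Nat.le_of_dvd (by omega) hdvd
            omega)]
          ring

/-- The power series of power sums. -/
noncomputable def pser (G : PowerSeries A) : PowerSeries A :=
  PowerSeries.mk fun n => pSeq (fun j => PowerSeries.coeff j G) n

/-- Negative of the "number operator" derivative: coefficient n is −n·(coeff n G). -/
noncomputable def nderNeg (G : PowerSeries A) : PowerSeries A :=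
  PowerSeries.mk fun n => -(n : A) * PowerSeries.coeff n G

theorem pser_mul_eq (G : PowerSeries A) (hG : PowerSeries.constantCoeff G = 1) :
    pser G * G = nderNeg G := by
  ext n
  rw [PowerSeries.coeff_mul]
  match n with
  | 0 =>
    simp [pser, nderNeg, pSeq_zero]
  | n + 1 =>
    rw [Finset.Nat.sum_antidiagonal_eq_sum_range_succ_mk, Finset.sum_range_succ,
      Finset.sum_range_succ']
    simp only [pser, nderNeg, PowerSeries.coeff_mk]
    have h0 : (coeff 0) G = 1 := by
      rw [PowerSeries.coeff_zero_eq_constantCoeff]; exact hG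
    have hrefl : ∑ k ∈ Finset.range n,
        pSeq (fun j => (coeff j) G) (k + 1) * (coeff (n + 1 - (k + 1))) G
        = ∑ i ∈ Finset.range n, (coeff (i+1)) G * pSeq (fun j => (coeff j) G) (n - i) := by
      rw [← Finset.sum_range_reflect]
      refine Finset.sum_congr rfl fun k hk => ?_
      have hk' := Finset.mem_range.mp hk
      have e1 : n - 1 - k + 1 = n - k := by omega
      have e2 : n + 1 - (n - k) = k + 1 := by omega
      rw [e1, e2, mul_comm]
    rw [hrefl, pSeq_zero, Nat.sub_zero, Nat.sub_self, h0, pSeq_succ]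
    ring

theorem nderNeg_mul (F G : PowerSeries A) :
    nderNeg (F * G) = nderNeg F * G + F * nderNeg G := by
  ext n
  rw [map_add, PowerSeries.coeff_mul, PowerSeries.coeff_mul]
  simp only [nderNeg, PowerSeries.coeff_mk]
  rw [PowerSeries.coeff_mul, Finset.mul_sum, ← Finset.sum_add_distrib]
  refine Finset.sum_congr rfl fun ij hij => ?_
  have hij' : ij.1 + ij.2 = n := Finset.HasAntidiagonal.mem_antidiagonal.mp hij
  rw [← hij']
  push_cast
  ring

theorem pser_mul (F G : PowerSeries A) (hF : PowerSeries.constantCoeff F = 1)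
    (hG : PowerSeries.constantCoeff G = 1) : pser (F * G) = pser F + pser G := by
  have hFG : PowerSeries.constantCoeff (F * G) = 1 := by
    rw [map_mul, hF, hG, mul_one]
  have hunit : IsUnit (F * G) :=
    IsUnit.of_mul_eq_one _ (PowerSeries.mul_invOfUnit (F*G) 1 (by rw [hFG, Units.val_one]))
  have key : (F * G) * pser (F * G) = (F * G) * (pser F + pser G) := by
    rw [mul_comm (F*G), pser_mul_eq _ hFG, nderNeg_mul, ← pser_mul_eq F hF, ← pser_mul_eq G hG]
    ring
  exact hunit.mul_left_cancel key

theorem pSeq_mul_coeff (F G : PowerSeries A) (hF : PowerSeries.constantCoeff F = 1)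
    (hG : PowerSeries.constantCoeff G = 1) (n : ℕ) :
    pSeq (fun j => PowerSeries.coeff j (F * G)) n
      = pSeq (fun j => PowerSeries.coeff j F) n + pSeq (fun j => PowerSeries.coeff j G) n := by
  have := congrArg (PowerSeries.coeff n) (pser_mul F G hF hG)
  simpa [pser, PowerSeries.coeff_mk] using this

/-- Witt coordinates relative to a power series with constant term 1. -/
noncomputable def wittAux (E : PowerSeries A) : ℕ → A × PowerSeries A
  | 0 => (0, 1)
  | n + 1 =>
    let g := (wittAux E n).2
    let x := PowerSeries.coeff (n+1) g - PowerSeries.coeff (n+1) E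
    (x, g * (1 - PowerSeries.C x * PowerSeries.X ^ (n+1)))

theorem wittAux_zero (E : PowerSeries A) : wittAux E 0 = (0, 1) := by rw [wittAux]

theorem wittAux_fst_succ (E : PowerSeries A) (n : ℕ) :
    (wittAux E (n+1)).1
      = PowerSeries.coeff (n+1) (wittAux E n).2 - PowerSeries.coeff (n+1) E := by
  rw [wittAux]

theorem wittAux_snd_succ (E : PowerSeries A) (n : ℕ) :
    (wittAux E (n+1)).2 = (wittAux E n).2 *
      (1 - PowerSeries.C ((wittAux E (n+1)).1) * PowerSeries.X ^ (n+1)) := by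
  rw [wittAux_fst_succ]
  conv_lhs => rw [wittAux]

lemma coeff_mul_one_sub (g : PowerSeries A) (x : A) (k i : ℕ) :
    PowerSeries.coeff i (g * (1 - PowerSeries.C x * PowerSeries.X ^ k))
      = PowerSeries.coeff i g
        - x * (if k ≤ i then PowerSeries.coeff (i - k) g else 0) := by
  rw [mul_sub, mul_one, map_sub]
  congr 1
  have hcomm : g * (PowerSeries.C x * PowerSeries.X ^ k)
      = (PowerSeries.C x * g) * PowerSeries.X ^ k := by ring
  rw [hcomm, PowerSeries.coeff_mul_X_pow']
  split
  · rw [PowerSeries.coeff_C_mul]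
  · rw [mul_zero]

theorem wittAux_snd_const (E : PowerSeries A) (n : ℕ) :
    PowerSeries.constantCoeff (wittAux E n).2 = 1 := by
  induction n with
  | zero => rw [wittAux_zero]; exact map_one _
  | succ n ih =>
    rw [wittAux_snd_succ, map_mul, ih, one_mul, map_sub, map_one, map_mul, map_pow,
      PowerSeries.constantCoeff_X, zero_pow (by omega), mul_zero, sub_zero]

theorem wittAux_coeff_eq (E : PowerSeries A) (hE : PowerSeries.constantCoeff E = 1)
    (n : ℕ) : ∀ i ≤ n, PowerSeries.coeff i (wittAux E n).2 = PowerSeries.coeff i E := by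
  induction n with
  | zero =>
    intro i hi
    interval_cases i
    rw [wittAux_zero]
    simp only [PowerSeries.coeff_zero_eq_constantCoeff, map_one, hE]
  | succ n ih =>
    intro i hi
    rw [wittAux_snd_succ, coeff_mul_one_sub]
    rcases Nat.lt_or_ge i (n+1) with hlt | hge
    · rw [if_neg (by omega), mul_zero, sub_zero, ih i (by omega)]
    · have hieq : i = n + 1 := by omega
      subst hieq
      rw [if_pos le_rfl, Nat.sub_self, PowerSeries.coeff_zero_eq_constantCoeff,
        wittAux_snd_const, mul_one, wittAux_fst_succ]
      ring

theorem pSeq_gprod (E : PowerSeries A) (N n : ℕ) (hn : 1 ≤ n) :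
    pSeq (fun j => PowerSeries.coeff j (wittAux E N).2) n
      = ∑ d ∈ Finset.Icc 1 N, (if d ∣ n then (d : A) * ((wittAux E d).1) ^ (n / d) else 0) := by
  induction N with
  | zero =>
    rw [show Finset.Icc 1 0 = (∅ : Finset ℕ) by rfl, Finset.sum_empty, wittAux_zero]
    refine pSeq_eq_zero _ n fun i h1 h2 => ?_
    rw [PowerSeries.coeff_one, if_neg (by omega)]
  | succ N ih =>
    have hgc : PowerSeries.constantCoeff (wittAux E N).2 = 1 := wittAux_snd_const E N
    have hfc : PowerSeries.constantCoeff
        (1 - PowerSeries.C ((wittAux E (N+1)).1) * PowerSeries.X ^ (N+1)) = 1 := by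
      rw [map_sub, map_one, map_mul, map_pow, PowerSeries.constantCoeff_X,
        zero_pow (by omega), mul_zero, sub_zero]
    have hcf : ∀ j, 1 ≤ j → PowerSeries.coeff j
        (1 - PowerSeries.C ((wittAux E (N+1)).1) * PowerSeries.X ^ (N+1))
          = if j = N + 1 then -((wittAux E (N+1)).1) else 0 := by
      intro j hj
      rw [map_sub, PowerSeries.coeff_one, if_neg (by omega), PowerSeries.coeff_C_mul,
        PowerSeries.coeff_X_pow]
      split_ifs <;> ring
    rw [wittAux_snd_succ, pSeq_mul_coeff _ _ hgc hfc n, ih,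
      Finset.sum_Icc_succ_top (by omega : 1 ≤ N + 1),
      pSeq_single ((wittAux E (N+1)).1) (N+1) (by omega) _ hcf n hn]

theorem pSeq_ghost (E : PowerSeries A) (hE : PowerSeries.constantCoeff E = 1)
    (N n : ℕ) (h1 : 1 ≤ n) (hn : n ≤ N) :
    pSeq (fun j => PowerSeries.coeff j E) n
      = ∑ d ∈ n.divisors, (d : A) * ((wittAux E d).1) ^ (n / d) := by
  set g := (wittAux E N).2 with hg
  have hg1 : PowerSeries.constantCoeff g = 1 := wittAux_snd_const E N
  have hg1' : PowerSeries.constantCoeff g = ((1 : Aˣ) : A) := by rw [hg1, Units.val_one]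
  set H := PowerSeries.invOfUnit g 1 * E with hH
  have hgH : g * H = E := by
    rw [hH, ← mul_assoc, PowerSeries.mul_invOfUnit g 1 hg1', one_mul]
  have hH1 : PowerSeries.constantCoeff H = 1 := by
    have := congrArg (PowerSeries.constantCoeff) hgH
    rw [map_mul, hg1, one_mul] at this
    rw [this, hE]
  have hHrep : H = 1 + PowerSeries.invOfUnit g 1 * (E - g) := by
    rw [mul_sub, mul_comm (PowerSeries.invOfUnit g 1) g, PowerSeries.mul_invOfUnit g 1 hg1']
    rw [hH]; ring
  have hHi : ∀ i, 1 ≤ i → i ≤ N → PowerSeries.coeff i H = 0 := by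
    intro i hi1 hi2
    rw [hHrep, map_add, PowerSeries.coeff_one, if_neg (by omega), PowerSeries.coeff_mul]
    rw [Finset.sum_eq_zero, add_zero]
    intro ij hij
    have hij' : ij.1 + ij.2 = i := Finset.HasAntidiagonal.mem_antidiagonal.mp hij
    have : PowerSeries.coeff ij.2 (E - g) = 0 := by
      rw [map_sub, wittAux_coeff_eq E hE N ij.2 (by omega), sub_self]
    rw [this, mul_zero]
  have step1 : pSeq (fun j => PowerSeries.coeff j E) n
      = pSeq (fun j => PowerSeries.coeff j g) n := by
    rw [← hgH, pSeq_mul_coeff _ _ hg1 hH1 n,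
      pSeq_eq_zero (fun j => PowerSeries.coeff j H) n
        (fun i hi1 hi2 => hHi i hi1 (le_trans hi2 hn)), add_zero]
  rw [step1, pSeq_gprod E N n h1]
  rw [← Finset.sum_filter]
  congr 1
  ext d
  simp only [Finset.mem_filter, Finset.mem_Icc, Nat.mem_divisors]
  constructor
  · rintro ⟨⟨hd1, hd2⟩, hdvd⟩; exact ⟨hdvd, by omega⟩
  · rintro ⟨hdvd, -⟩
    have hd0 : d ≠ 0 := by rintro rfl; rw [zero_dvd_iff] at hdvd; omega
    have := Nat.le_of_dvd (by omega) hdvd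
    exact ⟨⟨by omega, by omega⟩, hdvd⟩

theorem wittAux_mem (E F : PowerSeries A) (I : Ideal A)
    (h : ∀ i, PowerSeries.coeff i E - PowerSeries.coeff i F ∈ I) (n : ℕ) :
    ((wittAux E n).1 - (wittAux F n).1 ∈ I) ∧
      ∀ i, PowerSeries.coeff i (wittAux E n).2 - PowerSeries.coeff i (wittAux F n).2 ∈ I := by
  induction n with
  | zero =>
    rw [wittAux_zero, wittAux_zero]
    exact ⟨by simpa using I.zero_mem, fun i => by simp⟩
  | succ n ih =>
    have hx : (wittAux E (n+1)).1 - (wittAux F (n+1)).1 ∈ I := by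
      rw [wittAux_fst_succ, wittAux_fst_succ]
      have h1 := ih.2 (n+1)
      have h2 := h (n+1)
      have : PowerSeries.coeff (n+1) (wittAux E n).2 - PowerSeries.coeff (n+1) E
          - (PowerSeries.coeff (n+1) (wittAux F n).2 - PowerSeries.coeff (n+1) F)
          = (PowerSeries.coeff (n+1) (wittAux E n).2
              - PowerSeries.coeff (n+1) (wittAux F n).2)
            - (PowerSeries.coeff (n+1) E - PowerSeries.coeff (n+1) F) := by ring
      rw [this]
      exact I.sub_mem h1 h2
    refine ⟨hx, fun i => ?_⟩
    rw [wittAux_snd_succ, wittAux_snd_succ, coeff_mul_one_sub, coeff_mul_one_sub]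
    by_cases hni : n + 1 ≤ i
    · rw [if_pos hni, if_pos hni]
      have : PowerSeries.coeff i (wittAux E n).2
            - (wittAux E (n+1)).1 * PowerSeries.coeff (i - (n+1)) (wittAux E n).2
          - (PowerSeries.coeff i (wittAux F n).2
            - (wittAux F (n+1)).1 * PowerSeries.coeff (i - (n+1)) (wittAux F n).2)
          = (PowerSeries.coeff i (wittAux E n).2 - PowerSeries.coeff i (wittAux F n).2)
            - (((wittAux E (n+1)).1 - (wittAux F (n+1)).1)
                * PowerSeries.coeff (i - (n+1)) (wittAux E n).2
              + (wittAux F (n+1)).1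
                * (PowerSeries.coeff (i - (n+1)) (wittAux E n).2
                  - PowerSeries.coeff (i - (n+1)) (wittAux F n).2)) := by ring
      rw [this]
      exact I.sub_mem (ih.2 i)
        (I.add_mem (I.mul_mem_right _ hx) (I.mul_mem_left _ (ih.2 _)))
    · rw [if_neg hni, if_neg hni, mul_zero, sub_zero, mul_zero, sub_zero]
      exact ih.2 i

lemma exists_rep_sum {ι : Type*} (I : Ideal A) (M : A) (s : Finset ι) (f : ι → A)
    (h : ∀ k ∈ s, ∃ c ∈ I, f k = M * c) : ∃ c ∈ I, ∑ k ∈ s, f k = M * c := by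
  classical
  induction s using Finset.induction_on with
  | empty => exact ⟨0, I.zero_mem, by simp⟩
  | @insert a s' hk ih =>
    obtain ⟨c1, hc1, e1⟩ := h a (Finset.mem_insert_self a s')
    obtain ⟨c2, hc2, e2⟩ := ih (fun k hks => h k (Finset.mem_insert_of_mem hks))
    exact ⟨c1 + c2, I.add_mem hc1 hc2, by rw [Finset.sum_insert hk, e1, e2, mul_add]⟩

variable (p : ℕ)

lemma pow_p_step (hp : p.Prime) (I : Ideal A) (hdp : ∀ a ∈ I, ∃ b ∈ I, a ^ p = (p : A) * b)
    (u v c : A) (j : ℕ) (hc : c ∈ I) (huv : u - v = (p : A) ^ j * c) :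
    ∃ c' ∈ I, u ^ p - v ^ p = (p : A) ^ (j + 1) * c' := by
  have hu : u = v + (p : A) ^ j * c := by rw [← huv]; ring
  have hterm : u ^ p - v ^ p
      = ∑ k ∈ Finset.range p, v ^ k * ((p : A) ^ j * c) ^ (p - k) * (p.choose k : A) := by
    rw [hu, add_pow, Finset.sum_range_succ, Nat.sub_self, pow_zero,
      Nat.choose_self, Nat.cast_one]
    ring
  rw [hterm]
  apply exists_rep_sum
  intro k hk
  have hk' := Finset.mem_range.mp hk
  rcases Nat.eq_zero_or_pos k with rfl | hkpos
  · obtain ⟨b, hb, hbe⟩ := hdp c hc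
    refine ⟨(p : A) ^ (j * (p - 1)) * b, I.mul_mem_left _ hb, ?_⟩
    rw [pow_zero, one_mul, Nat.sub_zero, Nat.choose_zero_right, Nat.cast_one, mul_one,
      mul_pow, ← pow_mul, hbe]
    have hpe : p - 1 + 1 = p := Nat.succ_pred_eq_of_pos hp.pos
    have e2 : j * p + 1 = (j + 1) + j * (p - 1) := by
      conv_lhs => rw [← hpe]
      ring
    calc (p : A) ^ (j * p) * ((p : A) * b) = (p : A) ^ (j * p + 1) * b := by
          rw [pow_succ]; ring
      _ = (p : A) ^ (j + 1) * ((p : A) ^ (j * (p - 1)) * b) := by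
          rw [e2, pow_add]; ring
  · obtain ⟨m, hm⟩ := Nat.Prime.dvd_choose_self hp (by omega : k ≠ 0) hk'
    refine ⟨(p : A) ^ (j * (p - k - 1)) * c ^ (p - k - 1) * (v ^ k * (m : A)) * c,
      I.mul_mem_left _ hc, ?_⟩
    have hpk : p - k = (p - k - 1) + 1 := by omega
    have e2 : c ^ (p - k) = c ^ (p - k - 1) * c := by
      conv_lhs => rw [hpk]
      rw [pow_succ]
    have e3 : (p : A) ^ (j * (p - k)) * (p : A)
        = (p : A) ^ (j + 1) * (p : A) ^ (j * (p - k - 1)) := by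
      rw [← pow_succ, ← pow_add]
      congr 1
      conv_lhs => rw [hpk]
      ring
    rw [hm, Nat.cast_mul, mul_pow, ← pow_mul]
    calc v ^ k * ((p : A) ^ (j * (p - k)) * c ^ (p - k)) * ((p : A) * (m : A))
        = ((p : A) ^ (j * (p - k)) * (p : A)) * (v ^ k * c ^ (p - k) * (m : A)) := by ring
      _ = ((p : A) ^ (j + 1) * (p : A) ^ (j * (p - k - 1)))
          * (v ^ k * (c ^ (p - k - 1) * c) * (m : A)) := by rw [e3, e2]
      _ = (p : A) ^ (j + 1)
          * ((p : A) ^ (j * (p - k - 1)) * c ^ (p - k - 1) * (v ^ k * (m : A)) * c) := by ring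

lemma pow_pj (hp : p.Prime) (I : Ideal A) (hdp : ∀ a ∈ I, ∃ b ∈ I, a ^ p = (p : A) * b)
    (u v : A) (hc : u - v ∈ I) : ∀ j, ∃ c ∈ I, u ^ (p ^ j) - v ^ (p ^ j) = (p : A) ^ j * c := by
  intro j
  induction j with
  | zero => exact ⟨u - v, hc, by simp⟩
  | succ j ih =>
    obtain ⟨c, hcI, hce⟩ := ih
    obtain ⟨c', hc'I, hc'e⟩ := pow_p_step p hp I hdp (u ^ (p ^ j)) (v ^ (p ^ j)) c j hcI hce
    refine ⟨c', hc'I, ?_⟩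
    rw [pow_succ, pow_mul, pow_mul]
    exact hc'e

lemma pow_general (hp : p.Prime) (I : Ideal A) (hdp : ∀ a ∈ I, ∃ b ∈ I, a ^ p = (p : A) * b)
    (u v : A) (hc : u - v ∈ I) (n : ℕ) :
    ∃ c ∈ I, u ^ n - v ^ n = (p : A) ^ (n.factorization p) * c := by
  set j := n.factorization p with hj
  obtain ⟨c, hcI, hce⟩ := pow_pj p hp I hdp u v hc j
  obtain ⟨m, hm⟩ := Nat.ordProj_dvd n p
  obtain ⟨s, hs⟩ := sub_dvd_pow_sub_pow (u ^ (p ^ j)) (v ^ (p ^ j)) m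
  refine ⟨c * s, I.mul_mem_right _ hcI, ?_⟩
  calc u ^ n - v ^ n = (u ^ (p ^ j)) ^ m - (v ^ (p ^ j)) ^ m := by
        rw [← pow_mul, ← pow_mul, ← hm]
    _ = (u ^ (p ^ j) - v ^ (p ^ j)) * s := hs
    _ = (p : A) ^ j * (c * s) := by rw [hce]; ring

lemma isUnit_of_coprime (hp : p.Prime) (hinv : ∀ q : ℕ, q.Prime → q ≠ p → IsUnit (q : A)) :
    ∀ n : ℕ, n ≠ 0 → ¬ p ∣ n → IsUnit ((n : ℕ) : A) := by
  intro n
  induction n using Nat.strong_induction_on with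
  | _ n ih =>
    intro hn0 hpn
    rcases eq_or_ne n 1 with rfl | hn1
    · simp
    obtain ⟨q, hq, hqd⟩ := Nat.exists_prime_and_dvd hn1
    have hqd' := hqd
    obtain ⟨m, hm⟩ := hqd'
    have hq2 := hq.two_le
    have hqne : q ≠ p := by rintro rfl; exact hpn hqd
    have hm0 : m ≠ 0 := by rintro rfl; omega
    have hmn : m < n := by
      have : 1 * m < q * m := by
        apply Nat.mul_lt_mul_of_lt_of_le (by omega) le_rfl (by omega)
      omega
    have hpm : ¬ p ∣ m := fun hd => hpn (hm ▸ hd.mul_left q)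
    have hmu : IsUnit ((m : ℕ) : A) := ih m hmn hm0 hpm
    rw [hm, Nat.cast_mul]
    exact (hinv q hq hqne).mul hmu

end DPProof

/-- Let A be a torsion-free ℤ_(p)-algebra, 𝔞 a divided-power ideal, and P, Q monic
polynomials in A[X].  If e_n(P) ≡ e_n(Q) mod 𝔞 for all 1 ≤ n ≤ N, then
p_N(P) ≡ p_N(Q) mod N·𝔞. -/
theorem esymm_congr_imp_psum_deep_congr {A : Type*} [CommRing A] (p : ℕ) (hp : p.Prime)
    (htf : ∀ (n : ℤ) (a : A), n ≠ 0 → n • a = 0 → a = 0)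
    (hinv : ∀ q : ℕ, q.Prime → q ≠ p → IsUnit (q : A))
    (I : Ideal A) (hdp : ∀ a ∈ I, ∃ b ∈ I, a ^ p = (p : A) * b)
    (P Q : Polynomial A) (hP : P.Monic) (hQ : Q.Monic) (N : ℕ) (hN : 1 ≤ N)
    (h : ∀ n : ℕ, 1 ≤ n → n ≤ N → esymmOfPoly P n - esymmOfPoly Q n ∈ I) :
    ∃ b ∈ I, newtonPower (esymmOfPoly P) N - newtonPower (esymmOfPoly Q) N = (N : A) * b := by
  classical
  set e : ℕ → A := esymmOfPoly P with he
  set f : ℕ → A := esymmOfPoly Q with hf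
  set e' : ℕ → A := fun n => if n ≤ N then e n else f n with he'
  set Eps : PowerSeries A := PowerSeries.mk fun n => if n = 0 then 1 else (-1:A)^n * e' n
    with hEps
  set Fps : PowerSeries A := PowerSeries.mk fun n => if n = 0 then 1 else (-1:A)^n * f n
    with hFps
  have hE1 : PowerSeries.constantCoeff Eps = 1 := by
    rw [← PowerSeries.coeff_zero_eq_constantCoeff_apply, hEps, PowerSeries.coeff_mk, if_pos rfl]
  have hF1 : PowerSeries.constantCoeff Fps = 1 := by
    rw [← PowerSeries.coeff_zero_eq_constantCoeff_apply, hFps, PowerSeries.coeff_mk, if_pos rfl]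
  have hNPe : newtonPower e N = DPProof.pSeq (fun j => PowerSeries.coeff j Eps) N := by
    rw [DPProof.newtonPower_eq_pSeq]
    apply DPProof.pSeq_congr
    intro i h1 h2
    rw [hEps, PowerSeries.coeff_mk, if_neg (by omega), he']
    simp only []
    rw [if_pos h2]
  have hNPf : newtonPower f N = DPProof.pSeq (fun j => PowerSeries.coeff j Fps) N := by
    rw [DPProof.newtonPower_eq_pSeq]
    apply DPProof.pSeq_congr
    intro i h1 h2
    rw [hFps, PowerSeries.coeff_mk, if_neg (by omega)]
  have hcoeffI : ∀ i, PowerSeries.coeff i Eps - PowerSeries.coeff i Fps ∈ I := by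
    intro i
    rw [hEps, hFps, PowerSeries.coeff_mk, PowerSeries.coeff_mk]
    rcases eq_or_ne i 0 with rfl | hi0
    · rw [if_pos rfl, if_pos rfl, sub_self]; exact I.zero_mem
    · rw [if_neg hi0, if_neg hi0, he']
      simp only []
      by_cases hiN : i ≤ N
      · rw [if_pos hiN]
        have : (-1:A)^i * e i - (-1:A)^i * f i = (-1:A)^i * (e i - f i) := by ring
        rw [this]
        exact I.mul_mem_left _ (h i (by omega) hiN)
      · rw [if_neg hiN, sub_self]; exact I.zero_mem
  have ghostE := DPProof.pSeq_ghost Eps hE1 N N hN le_rfl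
  have ghostF := DPProof.pSeq_ghost Fps hF1 N N hN le_rfl
  set k := N.factorization p with hk
  have hterm : ∀ d ∈ N.divisors, ∃ c ∈ I,
      (d:A) * ((DPProof.wittAux Eps d).1)^(N/d) - (d:A) * ((DPProof.wittAux Fps d).1)^(N/d)
        = (p:A)^k * c := by
    intro d hd
    obtain ⟨hdN, hN0⟩ := Nat.mem_divisors.mp hd
    have hd0 : d ≠ 0 := by rintro rfl; exact hN0 (Nat.eq_zero_of_zero_dvd hdN)
    have hXI : (DPProof.wittAux Eps d).1 - (DPProof.wittAux Fps d).1 ∈ I :=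
      (DPProof.wittAux_mem Eps Fps I hcoeffI d).1
    obtain ⟨c, hcI, hce⟩ := DPProof.pow_general p hp I hdp _ _ hXI (N/d)
    have hfac : d.factorization p + (N/d).factorization p = k := by
      have h1 := Nat.factorization_div hdN
      have h2 : d.factorization p ≤ N.factorization p :=
        Finsupp.le_def.mp ((Nat.factorization_le_iff_dvd hd0 hN0).2 hdN) p
      rw [hk, h1, Finsupp.tsub_apply]
      omega
    set u := d / p ^ (d.factorization p) with hu
    have hdu : p ^ (d.factorization p) * u = d := Nat.ordProj_mul_ordCompl_eq_self d p
    refine ⟨(u:A) * c, I.mul_mem_left _ hcI, ?_⟩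
    calc (d:A) * ((DPProof.wittAux Eps d).1)^(N/d) - (d:A) * ((DPProof.wittAux Fps d).1)^(N/d)
        = (d:A) * (((DPProof.wittAux Eps d).1)^(N/d) - ((DPProof.wittAux Fps d).1)^(N/d)) := by
          ring
      _ = (d:A) * ((p:A)^((N/d).factorization p) * c) := by rw [hce]
      _ = (p:A)^k * ((u:A) * c) := by
          have hcast : (d : A) = (p:A)^(d.factorization p) * (u:A) := by
            conv_lhs => rw [← hdu]
            push_cast; ring
          rw [hcast, ← hfac, pow_add]
          ring
  rw [hNPe, hNPf, ghostE, ghostF, ← Finset.sum_sub_distrib]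
  obtain ⟨c, hcI, hce⟩ := DPProof.exists_rep_sum I ((p:A)^k) N.divisors _ hterm
  set m := N / p ^ k with hm
  have hmN : p ^ k * m = N := Nat.ordProj_mul_ordCompl_eq_self N p
  have hm0 : m ≠ 0 := by rintro h0; rw [h0, mul_zero] at hmN; omega
  have hmp : ¬ p ∣ m := Nat.not_dvd_ordCompl hp (by omega)
  have hmu : IsUnit ((m : ℕ) : A) := DPProof.isUnit_of_coprime p hp hinv m hm0 hmp
  obtain ⟨w, hw⟩ := hmu.exists_left_inv
  refine ⟨w * c, I.mul_mem_left _ hcI, ?_⟩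
  rw [hce, ← hmN]
  push_cast
  rw [show ((p:A))^k * (m:A) * (w * c) = (p:A)^k * ((w * (m:A)) * c) by ring, hw, one_mul]
end

section
/- Let p be a prime, A a torsion-free ℤ_(p)-algebra, 𝔞 ⊆ A a divided-power ideal, and P, Q monic polynomials in A[X]. Fix N ≥ 1. If p_n(P) ≡ p_n(Q) mod n·𝔞 for all 1 ≤ n ≤ N, then e_n(P) ≡ e_n(Q) mod 𝔞 for all 1 ≤ n ≤ N. -/
open Finset PowerSeries

section Aux

variable {A : Type*} [CommRing A]

/-- If every prime other than `p` is invertible in `A`, then every natural number coprime to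
`p` is invertible in `A`. -/
lemma aux_coprime_unit (p : ℕ) (hp : p.Prime)
    (hinv : ∀ q : ℕ, q.Prime → q ≠ p → IsUnit (q : A)) :
    ∀ m : ℕ, m ≠ 0 → ¬ p ∣ m → IsUnit (m : A) := by
  intro m
  induction m using Nat.strong_induction_on with
  | _ m ih =>
    intro hm0 hpm
    rcases eq_or_ne m 1 with rfl | hm1
    · simp
    · have hq : m.minFac.Prime := Nat.minFac_prime hm1
      have hqd : m.minFac ∣ m := Nat.minFac_dvd m
      obtain ⟨t, ht⟩ := hqd
      have hqp : m.minFac ≠ p := fun h => hpm (h ▸ ⟨t, ht⟩)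
      have ht0 : t ≠ 0 := by rintro rfl; simp at ht; exact hm0 ht
      have hpt : ¬ p ∣ t := fun hd => hpm (ht ▸ hd.mul_left _)
      have htlt : t < m := by
        rw [ht]
        exact Nat.lt_mul_iff_one_lt_left (Nat.pos_of_ne_zero ht0) |>.mpr hq.one_lt
      have hcast : (m : A) = (m.minFac : A) * (t : A) := by
        conv_lhs => rw [ht]
        push_cast
        ring
      rw [hcast]
      exact (hinv _ hq hqp).mul (ih t htlt ht0 hpt)

/-- `p^q * q!` divides `(p*q)!`. -/
lemma aux_pow_fact_dvd (p : ℕ) (hp : 1 ≤ p) : ∀ q : ℕ, p ^ q * q.factorial ∣ (p * q).factorial := by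
  intro q
  induction q with
  | zero => simp
  | succ q ih =>
    have hpos : 1 ≤ p * (q + 1) := Nat.mul_pos (by omega) (by omega)
    have h3 : (p * (q + 1)).factorial = (p * (q + 1)) * (p * (q + 1) - 1).factorial := by
      conv_lhs => rw [show p * (q + 1) = (p * (q + 1) - 1) + 1 by omega]
      rw [Nat.factorial_succ]
      congr 1
      omega
    have h2 : p * q ≤ p * (q + 1) - 1 := by
      have : p * q + p = p * (q + 1) := by ring
      omega
    calc p ^ (q + 1) * (q + 1).factorial
        = (p ^ q * q.factorial) * (p * (q + 1)) := by rw [Nat.factorial_succ]; ring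
      _ ∣ (p * q).factorial * (p * (q + 1)) := mul_dvd_mul_right ih _
      _ ∣ (p * (q + 1) - 1).factorial * (p * (q + 1)) :=
          mul_dvd_mul_right (Nat.factorial_dvd_factorial h2) _
      _ = (p * (q + 1)).factorial := by rw [h3, mul_comm]

/-- valuation fact: with `q = k / p`, the quotient `k! / (p^q * q!)` is prime to `p`. -/
lemma aux_fact_decomp (p : ℕ) (hp : p.Prime) (k : ℕ) (hk : p ≤ k) :
    ∃ m : ℕ, m ≠ 0 ∧ ¬ p ∣ m ∧
      k.factorial = p ^ (k / p) * (k / p).factorial * m := by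
  set q := k / p with hq
  have hpqk : p * q ≤ k := by rw [mul_comm]; exact Nat.div_mul_le_self k p
  have hdvd : p ^ q * q.factorial ∣ k.factorial :=
    dvd_trans (aux_pow_fact_dvd p hp.pos q) (Nat.factorial_dvd_factorial hpqk)
  set m := k.factorial / (p ^ q * q.factorial) with hm
  have hfac : k.factorial = p ^ q * q.factorial * m := (Nat.mul_div_cancel' hdvd).symm
  have hm0 : m ≠ 0 := by
    intro h
    rw [h, mul_zero] at hfac
    exact (Nat.factorial_pos k).ne' hfac
  refine ⟨m, hm0, ?_, hfac⟩
  -- valuations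
  have hfin : FiniteMultiplicity p q.factorial :=
    Nat.finiteMultiplicity_iff.2 ⟨hp.ne_one, Nat.factorial_pos q⟩
  have h1 : emultiplicity p (p * q).factorial = emultiplicity p q.factorial + q :=
    hp.emultiplicity_factorial_mul
  have h2 : emultiplicity p k.factorial = emultiplicity p (p * q).factorial := by
    have hb1 : Nat.log p k < k + 1 := Nat.lt_succ_of_le (Nat.log_le_self p k)
    have hb2 : Nat.log p (p * q) < k + 1 :=
      Nat.lt_succ_of_le ((Nat.log_mono_right hpqk).trans (Nat.log_le_self p k))
    rw [hp.emultiplicity_factorial hb1, hp.emultiplicity_factorial hb2]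
    norm_cast
    apply Finset.sum_congr rfl
    intro i hi
    simp only [Finset.mem_Ico] at hi
    have hi1 : 1 ≤ i := hi.1
    have hpi : p ^ i = p * p ^ (i - 1) := by
      conv_lhs => rw [show i = 1 + (i - 1) by omega]
      rw [pow_add, pow_one]
    rw [hpi, ← Nat.div_div_eq_div_mul, ← Nat.div_div_eq_div_mul, ← hq,
      Nat.mul_div_cancel_left q hp.pos]
  intro hpm
  have h3 : emultiplicity p k.factorial =
      (q : ℕ∞) + emultiplicity p q.factorial + emultiplicity p m := by
    rw [hfac, emultiplicity_mul hp.prime, emultiplicity_mul hp.prime,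
      emultiplicity_pow_self_of_prime hp.prime]
  have h4 : (1 : ℕ∞) ≤ emultiplicity p m := by
    rw [← pow_one p] at hpm
    exact_mod_cast pow_dvd_iff_le_emultiplicity.mp hpm
  have h5 : emultiplicity p q.factorial + (q : ℕ∞) + 1 ≤
      emultiplicity p q.factorial + (q : ℕ∞) := by
    calc emultiplicity p q.factorial + (q : ℕ∞) + 1
        ≤ (q : ℕ∞) + emultiplicity p q.factorial + emultiplicity p m := by
          rw [add_comm (emultiplicity p q.factorial) (q : ℕ∞)]
          exact add_le_add_right h4 _
      _ = emultiplicity p k.factorial := h3.symm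
      _ = emultiplicity p q.factorial + (q : ℕ∞) := by rw [h2, h1]
  have hne : emultiplicity p q.factorial + (q : ℕ∞) ≠ (⊤ : ℕ∞) := by
    apply WithTop.add_ne_top.mpr
    exact ⟨finiteMultiplicity_iff_emultiplicity_ne_top.1 hfin, WithTop.coe_ne_top⟩
  exact absurd ((ENat.add_one_le_iff hne).mp h5) (lt_irrefl _)

/-- The divided-power property propagates to all factorials: for `c ∈ I` and `k ≥ 1` there is
`y ∈ I` with `k! * y = c ^ k`. -/
lemma aux_dp_factorial (p : ℕ) (hp : p.Prime)
    (hinv : ∀ q : ℕ, q.Prime → q ≠ p → IsUnit (q : A))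
    (I : Ideal A) (hdp : ∀ a ∈ I, ∃ b ∈ I, a ^ p = (p : A) * b) :
    ∀ k : ℕ, 1 ≤ k → ∀ c ∈ I, ∃ y ∈ I, (k.factorial : A) * y = c ^ k := by
  intro k
  induction k using Nat.strong_induction_on with
  | _ k ih =>
    intro hk c hc
    by_cases hkp : k < p
    · -- k! is a unit
      have hu : IsUnit ((k.factorial : ℕ) : A) := by
        apply aux_coprime_unit p hp hinv
        · exact (Nat.factorial_pos k).ne'
        · rw [hp.dvd_factorial]
          omega
      obtain ⟨u, hu⟩ := hu
      refine ⟨(↑u⁻¹ : A) * c ^ k, I.mul_mem_left _ (I.pow_mem_of_mem hc k hk), ?_⟩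
      rw [← hu]
      calc (u : A) * ((↑u⁻¹ : A) * c ^ k) = ((u : A) * (↑u⁻¹ : A)) * c ^ k := by ring
        _ = c ^ k := by rw [u.mul_inv, one_mul]
    · -- p ≤ k
      push_neg at hkp
      set q := k / p with hqdef
      set r := k % p with hrdef
      have hq1 : 1 ≤ q := Nat.one_le_div_iff hp.pos |>.mpr hkp
      have hqk : q < k := Nat.div_lt_self (by omega) hp.one_lt
      obtain ⟨b, hbI, hb⟩ := hdp c hc
      obtain ⟨z, hzI, hz⟩ := ih q hqk hq1 b hbI
      obtain ⟨m, hm0, hpm, hfac⟩ := aux_fact_decomp p hp k hkp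
      have hum : IsUnit ((m : ℕ) : A) := aux_coprime_unit p hp hinv m hm0 hpm
      obtain ⟨u, hu⟩ := hum
      refine ⟨(↑u⁻¹ : A) * (z * c ^ r), I.mul_mem_left _ (I.mul_mem_right _ hzI), ?_⟩
      have hck : c ^ k = (p : A) ^ q * b ^ q * c ^ r := by
        conv_lhs => rw [show k = p * q + r from (Nat.div_add_mod k p).symm]
        rw [pow_add, pow_mul, hb, mul_pow]
      have hfacA : (k.factorial : A) = (p : A) ^ q * (q.factorial : A) * (m : A) := by
        rw [hfac]; push_cast; ring
      rw [hfacA, hck, ← hu]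
      calc (p : A) ^ q * (q.factorial : A) * (u : A) * ((↑u⁻¹ : A) * (z * c ^ r))
          = (p : A) ^ q * ((q.factorial : A) * z) * c ^ r * ((u : A) * (↑u⁻¹ : A)) := by ring
        _ = (p : A) ^ q * b ^ q * c ^ r := by rw [u.mul_inv, hz, mul_one]

lemma aux_coeff_X_mul_derivative (F : PowerSeries A) (n : ℕ) :
    (coeff n) (X * d⁄dX A F) = (n : A) * (coeff n) F := by
  cases n with
  | zero => simp
  | succ m =>
    rw [coeff_succ_X_mul, coeff_derivative]
    push_cast
    ring

lemma aux_coeff_mul_monomial (f : PowerSeries A) (m n : ℕ) (a : A) :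
    (coeff n) (f * monomial m a) = if m ≤ n then (coeff (n - m)) f * a else 0 := by
  rw [coeff_mul, Finset.Nat.sum_antidiagonal_eq_sum_range_succ_mk]
  simp only [coeff_monomial]
  rcases le_or_gt m n with hmn | hmn
  · rw [Finset.sum_eq_single (n - m), if_pos (by omega), if_pos hmn]
    · intro j hj hne
      rw [if_neg, mul_zero]
      simp only [Finset.mem_range] at hj
      omega
    · intro hj
      simp only [Finset.mem_range] at hj
      omega
  · rw [if_neg (by omega)]
    apply Finset.sum_eq_zero
    intro j hj
    rw [if_neg, mul_zero]
    simp only [Finset.mem_range] at hj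
    omega

/-- Converting the power-series ODE `X F' = F U` to a coefficient recursion, assuming the
constant coefficient of `U` vanishes. -/
lemma aux_ode_iff (F U : PowerSeries A) (hU0 : (coeff 0) U = 0) :
    X * d⁄dX A F = F * U ↔
      ∀ n : ℕ, (n : A) * (coeff n) F =
        ∑ j ∈ Finset.range n, (coeff j) F * (coeff (n - j)) U := by
  have key : ∀ n : ℕ, (coeff n) (F * U) =
      ∑ j ∈ Finset.range n, (coeff j) F * (coeff (n - j)) U := by
    intro n
    rw [coeff_mul, Finset.Nat.sum_antidiagonal_eq_sum_range_succ_mk, Finset.sum_range_succ]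
    simp [hU0]
  constructor
  · intro h n
    rw [← key, ← h, aux_coeff_X_mul_derivative]
  · intro h
    ext n
    rw [aux_coeff_X_mul_derivative, key, h]

/-- Product rule for the logarithmic ODE. -/
lemma aux_ode_mul {F G S T : PowerSeries A} (hF : X * d⁄dX A F = F * S)
    (hG : X * d⁄dX A G = G * T) :
    X * d⁄dX A (F * G) = (F * G) * (S + T) := by
  have hd : d⁄dX A (F * G) = F * d⁄dX A G + G * d⁄dX A F := by
    rw [Derivation.leibniz]
    simp only [smul_eq_mul]
    try ring
  rw [hd, mul_add]
  calc X * (F * d⁄dX A G) + X * (G * d⁄dX A F)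
      = F * (X * d⁄dX A G) + G * (X * d⁄dX A F) := by ring
    _ = F * (G * T) + G * (F * S) := by rw [hF, hG]
    _ = (F * G) * (S + T) := by ring

/-- Existence of the exponential-type series `exp(c t^m)` with coefficients the divided powers
of `c`; it solves `X W' = W * (m c X^m)` and has all positive coefficients in `I`. -/
lemma aux_exists_exp (htf : ∀ (n : ℤ) (a : A), n ≠ 0 → n • a = 0 → a = 0)
    (I : Ideal A)
    (hfac : ∀ k : ℕ, 1 ≤ k → ∀ c ∈ I, ∃ y ∈ I, (k.factorial : A) * y = c ^ k)
    (m : ℕ) (hm : 1 ≤ m) (c : A) (hc : c ∈ I) :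
    ∃ W : PowerSeries A, (coeff 0) W = 1 ∧ (∀ n, 1 ≤ n → (coeff n) W ∈ I) ∧
      X * d⁄dX A W = W * (monomial m ((m : A) * c)) := by
  have hy : ∀ k : ℕ, ∃ y : A, (k = 0 → y = 1) ∧ (1 ≤ k → y ∈ I) ∧
      (k.factorial : A) * y = c ^ k := by
    intro k
    rcases Nat.eq_zero_or_pos k with rfl | hk
    · exact ⟨1, fun _ => rfl, fun h => absurd h (by omega), by simp⟩
    · obtain ⟨y, hyI, hyf⟩ := hfac k hk c hc
      exact ⟨y, fun h => absurd h (by omega), fun _ => hyI, hyf⟩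
  choose y hy0 hyI hyfac using hy
  have hkey : ∀ k : ℕ, 1 ≤ k → (k : A) * y k = c * y (k - 1) := by
    intro k hk
    have hne : ((k - 1).factorial : ℤ) ≠ 0 := by
      exact_mod_cast (Nat.factorial_pos (k - 1)).ne'
    have hk' : k.factorial = k * (k - 1).factorial := by
      conv_lhs => rw [show k = (k - 1) + 1 by omega]
      rw [Nat.factorial_succ]
      rw [show k - 1 + 1 = k by omega]
    apply sub_eq_zero.mp
    apply htf ((k - 1).factorial : ℤ) _ hne
    rw [zsmul_eq_mul, mul_sub]
    have e1 : (((k - 1).factorial : ℤ) : A) * ((k : A) * y k) = c ^ k := by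
      push_cast
      rw [show ((k - 1).factorial : A) * ((k : A) * y k) =
        (((k * (k - 1).factorial : ℕ) : A)) * y k by push_cast; ring, ← hk', hyfac]
    have e2 : (((k - 1).factorial : ℤ) : A) * (c * y (k - 1)) = c ^ k := by
      push_cast
      rw [show ((k - 1).factorial : A) * (c * y (k - 1)) =
        c * (((k - 1).factorial : A) * y (k - 1)) by ring, hyfac, ← pow_succ']
      congr 1
      omega
    rw [e1, e2, sub_self]
  refine ⟨PowerSeries.mk fun n => if m ∣ n then y (n / m) else 0, ?_, ?_, ?_⟩
  · rw [coeff_mk]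
    simp [hy0 0 rfl]
  · intro n hn
    rw [coeff_mk]
    split
    · next hdvd =>
      apply hyI
      exact Nat.one_le_div_iff (by omega) |>.mpr (Nat.le_of_dvd (by omega) hdvd)
    · exact I.zero_mem
  · ext n
    rw [aux_coeff_X_mul_derivative, aux_coeff_mul_monomial, coeff_mk, coeff_mk]
    by_cases hd : m ∣ n
    · obtain ⟨k, rfl⟩ := hd
      rcases Nat.eq_zero_or_pos k with rfl | hk
      · rw [Nat.mul_zero]
        rw [if_pos (dvd_zero m), if_neg (by omega)]
        simp [hy0 0 rfl]
      · rw [if_pos ⟨k, rfl⟩, if_pos (Nat.le_mul_of_pos_right m hk)]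
        have hsub : m * k - m = m * (k - 1) := by
          cases k with
          | zero => omega
          | succ k' => rw [Nat.succ_sub_one, Nat.mul_succ]; omega
        rw [hsub, if_pos ⟨k - 1, rfl⟩, Nat.mul_div_cancel_left _ (by omega : 0 < m),
          Nat.mul_div_cancel_left _ (by omega : 0 < m)]
        have := hkey k hk
        push_cast
        calc (m : A) * (k : A) * y k = (m : A) * ((k : A) * y k) := by ring
          _ = (m : A) * (c * y (k - 1)) := by rw [this]
          _ = y (k - 1) * ((m : A) * c) := by ring
    · rw [if_neg hd]
      rcases le_or_gt m n with hmn | hmn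
      · rw [if_pos hmn, if_neg, zero_mul, mul_zero]
        intro hd2
        exact hd (by
          have := Nat.dvd_add hd2 (dvd_refl m)
          rwa [Nat.sub_add_cancel hmn] at this)
      · rw [if_neg (by omega), mul_zero]

/-- Coefficient-wise goodness of products: constant term 1, positive coefficients in `I`. -/
lemma aux_mul_good (I : Ideal A) {f g : PowerSeries A}
    (hf0 : (coeff 0) f = 1) (hfI : ∀ n, 1 ≤ n → (coeff n) f ∈ I)
    (hg0 : (coeff 0) g = 1) (hgI : ∀ n, 1 ≤ n → (coeff n) g ∈ I) :
    (coeff 0) (f * g) = 1 ∧ ∀ n, 1 ≤ n → (coeff n) (f * g) ∈ I := by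
  constructor
  · rw [coeff_mul]
    simp [hf0, hg0]
  · intro n hn
    rw [coeff_mul, Finset.Nat.sum_antidiagonal_eq_sum_range_succ_mk]
    apply Ideal.sum_mem
    intro j hj
    rcases Nat.eq_zero_or_pos j with rfl | hj1
    · exact Ideal.mul_mem_left _ _ (hgI n (by omega))
    · exact Ideal.mul_mem_right _ _ (hfI j hj1)

/-- Core abstract congruence lemma. -/
lemma aux_core (htf : ∀ (n : ℤ) (a : A), n ≠ 0 → n • a = 0 → a = 0)
    (I : Ideal A)
    (hfac : ∀ k : ℕ, 1 ≤ k → ∀ c ∈ I, ∃ y ∈ I, (k.factorial : A) * y = c ^ k)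
    (E E' S S' γ : ℕ → A) (hE0 : E 0 = 1) (hE'0 : E' 0 = 1)
    (hE : ∀ n : ℕ, (n : A) * E n = ∑ j ∈ Finset.range n, E j * S (n - j))
    (hE' : ∀ n : ℕ, (n : A) * E' n = ∑ j ∈ Finset.range n, E' j * S' (n - j))
    (N : ℕ) (hγI : ∀ m, 1 ≤ m → m ≤ N → γ m ∈ I)
    (hγ : ∀ m, 1 ≤ m → m ≤ N → S m = S' m + (m : A) * γ m) :
    ∀ n, 1 ≤ n → n ≤ N → E n - E' n ∈ I := by
  classical
  have hw : ∀ m : ℕ, ∃ W : PowerSeries A, (coeff 0) W = 1 ∧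
      (∀ n, 1 ≤ n → (coeff n) W ∈ I) ∧
      (1 ≤ m → m ≤ N → X * d⁄dX A W = W * (monomial m ((m : A) * γ m))) := by
    intro m
    by_cases hm : 1 ≤ m ∧ m ≤ N
    · obtain ⟨W, h1, h2, h3⟩ := aux_exists_exp htf I hfac m hm.1 (γ m) (hγI m hm.1 hm.2)
      exact ⟨W, h1, h2, fun _ _ => h3⟩
    · refine ⟨1, by simp, fun n hn => ?_, fun h1 h2 => absurd ⟨h1, h2⟩ hm⟩
      rw [coeff_one, if_neg (by omega)]
      exact I.zero_mem
  choose w hw0 hwI hwode using hw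
  -- the product over Icc 1 N and its properties
  have key : ∀ s : Finset ℕ, s ⊆ Finset.Icc 1 N →
      (coeff 0) (∏ m ∈ s, w m) = 1 ∧
      (∀ n, 1 ≤ n → (coeff n) (∏ m ∈ s, w m) ∈ I) ∧
      X * d⁄dX A (∏ m ∈ s, w m) =
        (∏ m ∈ s, w m) * (∑ m ∈ s, monomial m ((m : A) * γ m)) := by
    intro s
    induction s using Finset.cons_induction with
    | empty =>
      intro _
      refine ⟨by simp, fun n hn => ?_, ?_⟩
      · rw [Finset.prod_empty, coeff_one, if_neg (by omega)]
        exact I.zero_mem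
      · simp
    | cons a s ha ih =>
      intro hsub
      have hmem : a ∈ Finset.Icc 1 N := hsub (Finset.mem_cons_self a s)
      rw [Finset.mem_Icc] at hmem
      have hs : s ⊆ Finset.Icc 1 N := fun x hx => hsub (Finset.mem_cons.mpr (Or.inr hx))
      obtain ⟨ih0, ihI, ihode⟩ := ih hs
      rw [Finset.prod_cons, Finset.sum_cons]
      obtain ⟨g0, gI⟩ := aux_mul_good I (hw0 a) (hwI a) ih0 ihI
      refine ⟨g0, gI, ?_⟩
      have := aux_ode_mul (hwode a hmem.1 hmem.2) ihode
      exact this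
  obtain ⟨W0, WI, Wode⟩ := key (Finset.Icc 1 N) (subset_refl _)
  set WN : PowerSeries A := ∏ m ∈ Finset.Icc 1 N, w m with hWN
  set F : PowerSeries A := PowerSeries.mk E with hF
  set G : PowerSeries A := PowerSeries.mk E' with hG
  set Sh : PowerSeries A := PowerSeries.mk (fun t => if t = 0 then 0 else S t) with hSh
  set Sh' : PowerSeries A := PowerSeries.mk (fun t => if t = 0 then 0 else S' t) with hSh'
  set T : PowerSeries A := ∑ m ∈ Finset.Icc 1 N, monomial m ((m : A) * γ m) with hT
  have hT0 : (coeff 0) T = 0 := by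
    rw [hT, map_sum]
    apply Finset.sum_eq_zero
    intro m hm
    rw [Finset.mem_Icc] at hm
    rw [coeff_monomial, if_neg (by omega)]
  have hTt : ∀ t, 1 ≤ t → t ≤ N → (coeff t) T = (t : A) * γ t := by
    intro t ht1 htN
    rw [hT, map_sum]
    rw [Finset.sum_eq_single t]
    · rw [coeff_monomial, if_pos rfl]
    · intro m hm hne
      rw [coeff_monomial, if_neg (Ne.symm hne)]
    · intro hne
      exact absurd (Finset.mem_Icc.mpr ⟨ht1, htN⟩) hne
  have hFode : X * d⁄dX A F = F * Sh := by
    rw [aux_ode_iff _ _ (by rw [hSh, coeff_mk]; simp)]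
    intro n
    rw [hF, hSh]
    simp only [coeff_mk]
    rw [hE n]
    apply Finset.sum_congr rfl
    intro j hj
    rw [Finset.mem_range] at hj
    rw [if_neg (by omega)]
  have hGode : X * d⁄dX A G = G * Sh' := by
    rw [aux_ode_iff _ _ (by rw [hSh', coeff_mk]; simp)]
    intro n
    rw [hG, hSh']
    simp only [coeff_mk]
    rw [hE' n]
    apply Finset.sum_congr rfl
    intro j hj
    rw [Finset.mem_range] at hj
    rw [if_neg (by omega)]
  have hHode : X * d⁄dX A (G * WN) = (G * WN) * (Sh' + T) := aux_ode_mul hGode Wode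
  have hHrec := (aux_ode_iff _ _ (by
    rw [map_add, hT0, add_zero, hSh', coeff_mk]; simp)).mp hHode
  have hFrec := (aux_ode_iff _ _ (by rw [hSh, coeff_mk]; simp)).mp hFode
  -- uniqueness: E n = coeff n (G * WN) for n ≤ N
  have hH0 : (coeff 0) (G * WN) = 1 := by
    rw [coeff_mul]
    simp only [Finset.Nat.antidiagonal_zero, Finset.sum_singleton]
    rw [hG, coeff_mk, hE'0, W0, one_mul]
  have heq : ∀ n, n ≤ N → E n = (coeff n) (G * WN) := by
    intro n
    induction n using Nat.strong_induction_on with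
    | _ n ih =>
      intro hn
      rcases Nat.eq_zero_or_pos n with rfl | hn1
      · rw [hH0, hE0]
      · have h1 := hFrec n
        have h2 := hHrec n
        have hsum : ∑ j ∈ Finset.range n, (coeff j) F * (coeff (n - j)) Sh =
            ∑ j ∈ Finset.range n, (coeff j) (G * WN) * (coeff (n - j)) (Sh' + T) := by
          apply Finset.sum_congr rfl
          intro j hj
          rw [Finset.mem_range] at hj
          have hnj1 : 1 ≤ n - j := by omega
          have hnjN : n - j ≤ N := by omega
          congr 1
          · rw [hF, coeff_mk, ih j (by omega) (by omega)]
          · rw [map_add, hTt (n - j) hnj1 hnjN, hSh, hSh', coeff_mk, coeff_mk,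
              if_neg (by omega), if_neg (by omega), hγ (n - j) hnj1 hnjN]
        have h3 : (n : A) * (coeff n) F = (n : A) * (coeff n) (G * WN) := by
          rw [h1, h2, hsum]
        have h4 : ((n : ℤ)) • ((coeff n) F - (coeff n) (G * WN)) = 0 := by
          rw [zsmul_eq_mul, mul_sub]
          push_cast
          rw [h3, sub_self]
        have h5 := htf (n : ℤ) _ (by exact_mod_cast (by omega : n ≠ 0)) h4
        have h6 := sub_eq_zero.mp h5
        rw [hF, coeff_mk] at h6
        exact h6
  -- conclusion
  intro n hn1 hnN
  have hEn := heq n hnN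
  rw [coeff_mul, Finset.Nat.sum_antidiagonal_eq_sum_range_succ_mk, Finset.sum_range_succ] at hEn
  rw [Nat.sub_self, W0, mul_one, hG, coeff_mk] at hEn
  have : E n - E' n = ∑ j ∈ Finset.range n, (coeff j) G * (coeff (n - j)) WN := by
    rw [hEn]
    ring
  rw [this]
  apply Ideal.sum_mem
  intro j hj
  rw [Finset.mem_range] at hj
  exact Ideal.mul_mem_left _ _ (WI (n - j) (by omega))

/-- Newton's identity, reorganized: with `Ẽ_j = (-1)^j e_j` and `e_0 = 1`, we have
`n Ẽ_n = ∑_{j<n} Ẽ_j (-p_{n-j})`, directly from the definition of `newtonPower`. -/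
lemma aux_newton_rel (e : ℕ → A) (he : e 0 = 1) (n : ℕ) :
    (n : A) * ((-1 : A) ^ n * e n) =
      ∑ j ∈ Finset.range n, ((-1 : A) ^ j * e j) * (-(newtonPower e (n - j))) := by
  cases n with
  | zero => simp
  | succ m =>
    rw [Finset.sum_range_succ']
    have hdef : newtonPower e (m + 1) = (-1 : A) ^ m * ((m + 1 : ℕ) : A) * e (m + 1) +
        ∑ i ∈ Finset.range m, (-1 : A) ^ i * e (i + 1) * newtonPower e (m - i) := by
      rw [newtonPower]
    have hstep : ∀ i ∈ Finset.range m,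
        ((-1 : A) ^ (i + 1) * e (i + 1)) * (-(newtonPower e (m + 1 - (i + 1)))) =
        (-1 : A) ^ i * e (i + 1) * newtonPower e (m - i) := by
      intro i hi
      rw [show m + 1 - (i + 1) = m - i by omega]
      ring
    rw [Finset.sum_congr rfl hstep, he]
    simp only [Nat.sub_zero, pow_zero, one_mul]
    rw [hdef]
    push_cast
    ring

end Aux

/-- Let A be a torsion-free ℤ_(p)-algebra, 𝔞 a divided-power ideal, and P, Q monic
polynomials in A[X].  If p_n(P) ≡ p_n(Q) mod n·𝔞 for all 1 ≤ n ≤ N, then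
e_n(P) ≡ e_n(Q) mod 𝔞 for all 1 ≤ n ≤ N. -/
theorem psum_deep_congr_imp_esymm_congr {A : Type*} [CommRing A] (p : ℕ) (hp : p.Prime)
    (htf : ∀ (n : ℤ) (a : A), n ≠ 0 → n • a = 0 → a = 0)
    (hinv : ∀ q : ℕ, q.Prime → q ≠ p → IsUnit (q : A))
    (I : Ideal A) (hdp : ∀ a ∈ I, ∃ b ∈ I, a ^ p = (p : A) * b)
    (P Q : Polynomial A) (hP : P.Monic) (hQ : Q.Monic) (N : ℕ) (hN : 1 ≤ N)
    (h : ∀ n : ℕ, 1 ≤ n → n ≤ N →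
      ∃ b ∈ I, newtonPower (esymmOfPoly P) n - newtonPower (esymmOfPoly Q) n = (n : A) * b) :
    ∀ n : ℕ, 1 ≤ n → n ≤ N → esymmOfPoly P n - esymmOfPoly Q n ∈ I := by
  classical
  have hfac := aux_dp_factorial p hp hinv I hdp
  set e : ℕ → A := esymmOfPoly P with he
  set e' : ℕ → A := esymmOfPoly Q with he'
  have he0 : e 0 = 1 := by
    rw [he, esymmOfPoly, if_pos (Nat.zero_le _)]
    simp [hP.coeff_natDegree]
  have he'0 : e' 0 = 1 := by
    rw [he', esymmOfPoly, if_pos (Nat.zero_le _)]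
    simp [hQ.coeff_natDegree]
  -- choose the γ's
  have hb : ∀ m : ℕ, ∃ b : A, (1 ≤ m → m ≤ N → b ∈ I ∧
      newtonPower e m - newtonPower e' m = (m : A) * b) := by
    intro m
    by_cases hm : 1 ≤ m ∧ m ≤ N
    · obtain ⟨b, hbI, hbe⟩ := h m hm.1 hm.2
      exact ⟨b, fun _ _ => ⟨hbI, hbe⟩⟩
    · exact ⟨0, fun h1 h2 => absurd ⟨h1, h2⟩ hm⟩
  choose b hbspec using hb
  have main := aux_core htf I hfac
    (fun n => (-1 : A) ^ n * e n) (fun n => (-1 : A) ^ n * e' n)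
    (fun t => -(newtonPower e t)) (fun t => -(newtonPower e' t))
    (fun m => -(b m))
    (by simp [he0]) (by simp [he'0])
    (aux_newton_rel e he0) (aux_newton_rel e' he'0)
    N
    (fun m h1 h2 => I.neg_mem (hbspec m h1 h2).1)
    (fun m h1 h2 => by
      have hb2 := (hbspec m h1 h2).2
      linear_combination -hb2)
  intro n hn1 hnN
  have hmem := main n hn1 hnN
  have : esymmOfPoly P n - esymmOfPoly Q n =
      ((-1 : A) ^ n) * ((-1 : A) ^ n * e n - (-1 : A) ^ n * e' n) := by
    rw [he, he']
    have hsq : (-1 : A) ^ n * (-1 : A) ^ n = 1 := by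
      rw [← pow_add]
      exact Even.neg_one_pow ⟨n, rfl⟩
    calc esymmOfPoly P n - esymmOfPoly Q n
        = ((-1 : A) ^ n * (-1 : A) ^ n) * (esymmOfPoly P n - esymmOfPoly Q n) := by
          rw [hsq, one_mul]
      _ = ((-1 : A) ^ n) * ((-1 : A) ^ n * esymmOfPoly P n
            - (-1 : A) ^ n * esymmOfPoly Q n) := by ring
  rw [this]
  exact Ideal.mul_mem_left _ _ hmem
end
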